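/- arXiv:2206.11756 — 5 statements merged into one kernel-verified Lean document; each statement's English description precedes it below -/
import Mathlib

section
/- Let p, q ∈ ℕ be such that q is odd and p > q > 0. Then in the symmetric group S_p, both products [p][q] and [q][p] are cycles of length p (i.e., each is a cyclic permutation moving all p points). -/
/-- The cyclic permutation `[n] = (1,2,…,n)` considered as an element of the symmetric
group `S_p` on the `p` points `{0,…,p-1}` (written 0-indexed): it maps `i ↦ i + 1` for
`i < n - 1`, maps `n - 1 ↦ 0` and fixes all points `n, …, p - 1`. -/
def cyc (p n : ℕ) : Equiv.Perm (Fin p) :=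
  if h : n - 1 < p then Fin.cycleRange ⟨n - 1, h⟩ else 1

/-- Pointwise description of `cyc` on values. -/
lemma cyc_val (p n : ℕ) (hp : 0 < p) (hn : n ≤ p) (x : Fin p) :
    ((cyc p n) x).val =
      if x.val + 1 < n then x.val + 1 else if x.val + 1 = n then 0 else x.val := by
  obtain ⟨P, rfl⟩ : ∃ P, p = P + 1 := ⟨p - 1, by omega⟩
  unfold cyc
  rw [dif_pos (by omega : n - 1 < P + 1)]
  rw [Fin.cycleRange_apply]
  rcases Nat.lt_trichotomy (x.val + 1) n with h | h | h
  · rw [if_pos (by rw [Fin.lt_def]; simp; omega)]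
    rw [if_pos h]
    rw [Fin.val_add_one_of_lt]
    rw [Fin.lt_def]
    simp [Fin.last]
    omega
  · by_cases h0 : n = 0
    · omega
    · rw [if_neg (by rw [Fin.lt_def]; simp; omega),
        if_pos (by rw [Fin.ext_iff]; simp; omega), if_neg (by omega), if_pos h]
      simp
  · by_cases hx : x.val = n - 1
    · -- only possible when n = 0 and x = 0
      have hn0 : n = 0 := by omega
      rw [if_neg (by rw [Fin.lt_def]; simp; omega),
        if_pos (by rw [Fin.ext_iff]; simp; omega), if_neg (by omega), if_neg (by omega)]
      simp
      omega
    · rw [if_neg (by rw [Fin.lt_def]; simp; omega),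
        if_neg (by rw [Fin.ext_iff]; simp; omega), if_neg (by omega), if_neg (by omega)]

/-- The orbit of `0` under `cyc p q * cyc p p`. -/
def Eo (p q k : ℕ) : ℕ :=
  if k ≤ q / 2 then 2 * k
  else if k ≤ q / 2 + (p - q) then k + q / 2
  else 2 * (k - (q / 2 + (p - q))) - 1

lemma cyc_orbit (p q : ℕ) (hq : q % 2 = 1) (hqp : q < p) :
    ∀ k, k < p → (((cyc p q * cyc p p) ^ k) ⟨0, by omega⟩).val = Eo p q k := by
  intro k
  induction k with
  | zero =>
    intro _
    simp [Eo]
  | succ k ih =>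
    intro hk
    have ihv := ih (by omega)
    rw [pow_succ', Equiv.Perm.mul_apply, Equiv.Perm.mul_apply,
      cyc_val p q (by omega) (by omega), cyc_val p p (by omega) le_rfl, ihv]
    have hlt : Eo p q k < p := by
      unfold Eo
      split_ifs <;> omega
    unfold Eo
    split_ifs <;> omega

lemma Eo_surj (p q : ℕ) (hq : q % 2 = 1) (hqp : q < p) :
    ∀ y, y < p → ∃ k, k < p ∧ Eo p q k = y := by
  intro y hy
  by_cases h1 : y % 2 = 0 ∧ y < q
  · exact ⟨y / 2, by omega, by unfold Eo; split_ifs <;> omega⟩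
  by_cases h2 : q - 1 ≤ y
  · exact ⟨y - q / 2, by omega, by unfold Eo; split_ifs <;> omega⟩
  · exact ⟨q / 2 + (p - q) + (y + 1) / 2, by omega, by unfold Eo; split_ifs <;> omega⟩

/-- Let `p, q ∈ ℕ` with `q` odd and `p > q > 0`. Then in `S_p` both
products `[p][q]` and `[q][p]` (multiplied left to right, so the paper's `[p][q]`
is `cyc p q * cyc p p` in Mathlib's convention `(f * g) x = f (g x)`) are cycles of
length `p`. -/
theorem cyc_mul_cyc_isCycle (p q : ℕ) (hq_odd : Odd q) (hqp : q < p) (hq0 : 0 < q) :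
    ((cyc p q * cyc p p).IsCycle ∧ (cyc p q * cyc p p).support.card = p) ∧
    ((cyc p p * cyc p q).IsCycle ∧ (cyc p p * cyc p q).support.card = p) := by
  have hq : q % 2 = 1 := Nat.odd_iff.mp hq_odd
  set f := cyc p q * cyc p p with hf
  have hnontriv : ∀ y : Fin p, f y ≠ y := by
    intro y hy
    have hyv := congrArg Fin.val hy
    rw [hf, Equiv.Perm.mul_apply, cyc_val p q (by omega) (by omega),
      cyc_val p p (by omega) le_rfl] at hyv
    have := y.isLt
    split_ifs at hyv <;> omega
  have hsupp : f.support = Finset.univ :=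
    Finset.eq_univ_iff_forall.mpr fun y => Equiv.Perm.mem_support.mpr (hnontriv y)
  have hcard : f.support.card = p := by rw [hsupp]; simp
  have hsame : ∀ y : Fin p, f.SameCycle ⟨0, by omega⟩ y := by
    intro y
    obtain ⟨k, hk, hEo⟩ := Eo_surj p q hq hqp y.val y.isLt
    exact ⟨(k : ℤ), by
      rw [zpow_natCast]
      exact Fin.ext (by rw [cyc_orbit p q hq hqp k hk, hEo])⟩
  have hcyc : f.IsCycle := ⟨⟨0, by omega⟩, hnontriv _, fun y _ => hsame y⟩
  refine ⟨⟨hcyc, hcard⟩, ?_⟩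
  have hconj : cyc p p * cyc p q = cyc p p * f * (cyc p p)⁻¹ := by
    rw [hf]; group
  rw [hconj]
  exact ⟨hcyc.conj, by rw [Equiv.Perm.card_support_conj]; exact hcard⟩
end

section
/- Let p, q ∈ ℕ be primes with 2 < q < p, and let x₁, x₂ ∈ ℤ. Then, in the symmetric group S_p, both equalities [p]^{−x₂}[q]^{x₁}([p][q])^{x₂} = [q] and [q]^{x₁}[p]^{−x₂}([p][q])^{x₂} = [q] hold if and only if either (x₁ ≡ 1 mod q and x₂ ≡ 0 mod p) or (x₁ ≡ 0 mod q and x₂ ≡ 1 mod p). -/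
private lemma cyc_apply {p n : ℕ} (hn1 : 1 ≤ n) (hnp : n ≤ p) (j : Fin p) :
    ((cyc p n) j : ℕ) =
      if (j : ℕ) + 1 < n then (j : ℕ) + 1 else if (j : ℕ) + 1 = n then 0 else (j : ℕ) := by
  obtain ⟨m, rfl⟩ : ∃ m, p = m + 1 := ⟨p - 1, by omega⟩
  rw [cyc, dif_pos (by omega : n - 1 < m + 1)]
  rcases lt_trichotomy ((j : ℕ)) (n - 1) with h | h | h
  · rw [Fin.coe_cycleRange_of_lt (show j < ⟨n - 1, by omega⟩ from h)]
    rw [if_pos (by omega)]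
  · have hj : j = ⟨n - 1, by omega⟩ := Fin.ext h
    rw [hj, Fin.cycleRange_self]
    rw [if_neg (by simp; omega), if_pos (by simp; omega)]
    simp
  · rw [Fin.cycleRange_of_gt (show (⟨n - 1, by omega⟩ : Fin (m + 1)) < j from h)]
    rw [if_neg (by omega), if_neg (by omega)]

private lemma c_apply {p q : ℕ} (h2 : 2 ≤ q) (hqp : q < p) (j : Fin p) :
    ((cyc p q * cyc p p) j : ℕ) =
      if (j : ℕ) + 2 < q then (j : ℕ) + 2
      else if (j : ℕ) + 2 = q then 0
      else if (j : ℕ) + 1 < p then (j : ℕ) + 1 else 1 := by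
  rw [Equiv.Perm.mul_apply]
  have h1 : ((cyc p p) j : ℕ) =
      if (j : ℕ) + 1 < p then (j : ℕ) + 1 else if (j : ℕ) + 1 = p then 0 else (j : ℕ) :=
    cyc_apply (by omega) le_rfl j
  have h2' := cyc_apply (p := p) (n := q) (by omega) (by omega) ((cyc p p) j)
  rw [h2', h1]
  have hj := j.isLt
  split_ifs <;> omega

private lemma c_step {p q : ℕ} (h2 : 2 ≤ q) (hqp : q < p) (j k : ℕ) (hj : j < p) (hk : k < p)
    (hval : (if j + 2 < q then j + 2 else if j + 2 = q then 0 else if j + 1 < p then j + 1 else 1)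
      = k) :
    (cyc p q * cyc p p) ⟨j, hj⟩ = ⟨k, hk⟩ := by
  apply Fin.ext
  rw [c_apply h2 hqp]
  simpa using hval

private lemma exists_zpow_inv {n : ℕ} (hn : n.Prime) {z : ℤ} (h : ¬ (n : ℤ) ∣ z) :
    ∃ u : ℤ, ∀ {G : Type*} [inst : Group G] (g : G), orderOf g = n → (g ^ z) ^ u = g := by
  have hzn : ¬ n ∣ z.natAbs := fun hd => h (Int.natCast_dvd.mpr hd)
  have hc : IsCoprime z (n : ℤ) := by
    rw [Int.isCoprime_iff_gcd_eq_one]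
    exact Nat.Coprime.symm ((Nat.Prime.coprime_iff_not_dvd hn).mpr hzn)
  obtain ⟨u, v, huv⟩ := hc
  refine ⟨u, ?_⟩
  intro G _ g hg
  have hgn : g ^ (n : ℤ) = 1 := by
    rw [zpow_natCast, ← hg, pow_orderOf_eq_one]
  have h1 : z * u = 1 - (n : ℤ) * v := by linarith
  rw [← zpow_mul, h1, zpow_sub, zpow_one, zpow_mul, hgn, one_zpow, inv_one, mul_one]

private lemma orderOf_cyc {p n : ℕ} (h2 : 2 ≤ n) (hnp : n ≤ p) : orderOf (cyc p n) = n := by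
  have h : n - 1 < p := by omega
  rw [cyc, dif_pos h]
  unfold Fin.cycleRange
  rw [show (finRotate ((⟨n - 1, h⟩ : Fin p) + 1)).extendDomain
      (Fin.castLEEmb (Nat.succ_le_of_lt (⟨n - 1, h⟩ : Fin p).is_lt)).toEquivRange =
      (Equiv.Perm.extendDomainHom
        (Fin.castLEEmb (Nat.succ_le_of_lt (⟨n - 1, h⟩ : Fin p).is_lt)).toEquivRange)
          (finRotate ((⟨n - 1, h⟩ : Fin p) + 1)) from rfl]
  rw [orderOf_injective _ (Equiv.Perm.extendDomainHom_injective _)]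
  show orderOf (finRotate (n - 1 + 1)) = n
  have hcyc := isCycle_finRotate_of_le (n := n - 1 + 1) (by omega)
  rw [hcyc.orderOf, support_finRotate_of_le (by omega), Finset.card_univ,
    Fintype.card_fin]
  omega

private lemma orderOf_c {p q : ℕ} (h3 : 3 ≤ q) (hqp : q < p) (hqodd : q % 2 = 1) :
    orderOf (cyc p q * cyc p p) = p := by
  set C := cyc p q * cyc p p with hC
  have h2 : 2 ≤ q := by omega
  -- chain A: from q-1 up to p-1
  have hx0 : q - 1 < p := by omega
  have hA : ∀ j, q - 1 ≤ j → ∀ hj : j < p, C.SameCycle ⟨q - 1, hx0⟩ ⟨j, hj⟩ := by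
    intro j hj1
    induction j, hj1 using Nat.le_induction with
    | base => intro hj; exact Equiv.Perm.SameCycle.refl _ _
    | succ j hj ih =>
      intro hj1
      have := (ih (by omega)).apply_right
      rwa [c_step h2 hqp j (j + 1) (by omega) hj1 (by split_ifs <;> omega)] at this
  -- chain B: odd numbers 1, 3, ..., q-2
  have hB : ∀ k, ∀ _hk : 2 * k + 1 ≤ q - 2, C.SameCycle ⟨q - 1, hx0⟩ ⟨2 * k + 1, by omega⟩ := by
    intro k
    induction k with
    | zero =>
      intro hk
      have := (hA (p - 1) (by omega) (by omega)).apply_right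
      rwa [c_step h2 hqp (p - 1) 1 (by omega) (by omega) (by split_ifs <;> omega)] at this
    | succ k ih =>
      intro hk
      have := (ih (by omega)).apply_right
      rwa [c_step h2 hqp (2 * k + 1) (2 * (k + 1) + 1) (by omega) (by omega)
        (by split_ifs <;> omega)] at this
  -- chain Cv: even numbers 0, 2, ..., q-3
  have hE : ∀ k, ∀ _hk : 2 * k ≤ q - 3, C.SameCycle ⟨q - 1, hx0⟩ ⟨2 * k, by omega⟩ := by
    intro k
    induction k with
    | zero =>
      intro _
      have := (hB ((q - 3) / 2) (by omega)).apply_right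
      rwa [c_step h2 hqp (2 * ((q - 3) / 2) + 1) 0 (by omega) (by omega)
        (by split_ifs <;> omega)] at this
    | succ k ih =>
      intro hk
      have := (ih (by omega)).apply_right
      rwa [c_step h2 hqp (2 * k) (2 * (k + 1)) (by omega) (by omega)
        (by split_ifs <;> omega)] at this
  have key : ∀ y : Fin p, C.SameCycle ⟨q - 1, hx0⟩ y := by
    intro y
    have hy := y.isLt
    have hyeta : (⟨(y : ℕ), hy⟩ : Fin p) = y := rfl
    rcases le_or_gt (q - 1) (y : ℕ) with h | h
    · have := hA (y : ℕ) h hy; rwa [hyeta] at this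
    · rcases Nat.even_or_odd (y : ℕ) with ⟨k, hk⟩ | ⟨k, hk⟩
      · have := hE k (by omega)
        rwa [show (⟨2 * k, by omega⟩ : Fin p) = y from Fin.ext (by simp; omega)] at this
      · have := hB k (by omega)
        rwa [show (⟨2 * k + 1, by omega⟩ : Fin p) = y from Fin.ext (by simp; omega)] at this
  have hcyc : C.IsCycle := by
    refine ⟨⟨q - 1, hx0⟩, ?_, fun y _ => key y⟩
    rw [c_step h2 hqp (q - 1) q (by omega) (by omega) (by split_ifs <;> omega)]
    intro hcon
    have := congrArg Fin.val hcon
    simp at this; omega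
  have hsupp : C.support = Finset.univ := by
    ext y
    simp only [Equiv.Perm.mem_support, Finset.mem_univ, iff_true]
    intro hcon
    have := congrArg Fin.val hcon
    rw [c_apply h2 hqp] at this
    have hy := y.isLt
    split_ifs at this <;> omega
  rw [hcyc.orderOf, hsupp, Finset.card_univ, Fintype.card_fin]

private lemma mulQP_ne_mulPQ {p q : ℕ} (h3 : 3 ≤ q) (hqp : q < p) :
    cyc p q * cyc p p ≠ cyc p p * cyc p q := by
  intro h
  have h2 : 2 ≤ q := by omega
  have hl : (cyc p q * cyc p p) ⟨q - 1, by omega⟩ = ⟨q, by omega⟩ :=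
    c_step h2 hqp (q - 1) q (by omega) (by omega) (by split_ifs <;> omega)
  have hr : (cyc p p * cyc p q) ⟨q - 1, by omega⟩ = ⟨1, by omega⟩ := by
    rw [Equiv.Perm.mul_apply]
    have h1 : (cyc p q) ⟨q - 1, by omega⟩ = ⟨0, by omega⟩ := by
      apply Fin.ext
      rw [cyc_apply (by omega) (by omega)]
      simp only [Fin.val_mk]
      rw [if_neg (by omega), if_pos (by omega)]
    rw [h1]
    apply Fin.ext
    rw [cyc_apply (by omega) (le_refl p)]
    simp only [Fin.val_mk]
    rw [if_pos (by omega)]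
  rw [h, hr] at hl
  have := congrArg Fin.val hl
  simp only [Fin.val_mk] at this
  omega

/-- Let `p, q` be primes with `2 < q < p` and `x₁, x₂ ∈ ℤ`. In `S_p`
the two equalities `[p]^{−x₂}[q]^{x₁}([p][q])^{x₂} = [q]` and
`[q]^{x₁}[p]^{−x₂}([p][q])^{x₂} = [q]` (products taken left to right, so a paper
product `a b` is `b * a` in Mathlib's convention `(f * g) x = f (g x)`) both hold
if and only if either (`x₁ ≡ 1 mod q` and `x₂ ≡ 0 mod p`) or
(`x₁ ≡ 0 mod q` and `x₂ ≡ 1 mod p`). -/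
theorem cyc_equation_iff (p q : ℕ) (hp : p.Prime) (hq : q.Prime) (h2q : 2 < q)
    (hqp : q < p) (x₁ x₂ : ℤ) :
    ((cyc p q * cyc p p) ^ x₂ * (cyc p q) ^ x₁ * (cyc p p) ^ (-x₂) = cyc p q ∧
     (cyc p q * cyc p p) ^ x₂ * (cyc p p) ^ (-x₂) * (cyc p q) ^ x₁ = cyc p q) ↔
    ((x₁ ≡ 1 [ZMOD (q : ℤ)] ∧ x₂ ≡ 0 [ZMOD (p : ℤ)]) ∨
     (x₁ ≡ 0 [ZMOD (q : ℤ)] ∧ x₂ ≡ 1 [ZMOD (p : ℤ)])) := by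
  set Q := cyc p q with hQdef
  set P := cyc p p with hPdef
  set C := Q * P with hCdef
  have h3 : 3 ≤ q := h2q
  have hqodd : q % 2 = 1 := Nat.odd_iff.mp (hq.odd_of_ne_two (by omega))
  have hOQ : orderOf Q = q := orderOf_cyc (by omega) (by omega)
  have hOP : orderOf P = p := orderOf_cyc (by omega) le_rfl
  have hOC : orderOf C = p := orderOf_c h3 hqp hqodd
  -- zpow computation helper
  have zpQ : ∀ z w : ℤ, z ≡ w [ZMOD (q : ℤ)] → Q ^ z = Q ^ w := by
    intro z w h; rw [zpow_eq_zpow_iff_modEq, hOQ]; exact h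
  have zpP : ∀ z w : ℤ, z ≡ w [ZMOD (p : ℤ)] → P ^ z = P ^ w := by
    intro z w h; rw [zpow_eq_zpow_iff_modEq, hOP]; exact h
  have zpC : ∀ z w : ℤ, z ≡ w [ZMOD (p : ℤ)] → C ^ z = C ^ w := by
    intro z w h; rw [zpow_eq_zpow_iff_modEq, hOC]; exact h
  constructor
  · rintro ⟨E1, E2⟩
    -- Q^x₁ and P^(-x₂) commute
    have hcomm : Q ^ x₁ * P ^ (-x₂) = P ^ (-x₂) * Q ^ x₁ := by
      have h := E1.trans E2.symm
      rw [mul_assoc, mul_assoc] at h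
      exact mul_left_cancel h
    by_cases hdvd : (q : ℤ) ∣ x₁
    · -- Q^x₁ = 1
      right
      have hQ1 : Q ^ x₁ = 1 := by
        rw [zpow_eq_one_iff_modEq, hOQ]; exact Int.modEq_zero_iff_dvd.mpr hdvd
      rw [hQ1, mul_one] at E1
      -- C^x₂ = Q * P^x₂
      have h1 : C ^ x₂ = Q * P ^ x₂ := by
        rw [← E1, mul_assoc, ← zpow_add]
        norm_num
      have key : C ^ (x₂ - 1) = P ^ (x₂ - 1) := by
        have e0 : C ^ (x₂ - 1) = C⁻¹ * C ^ x₂ := by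
          rw [← zpow_neg_one, ← zpow_add]; congr 1; ring
        have e1 : P ^ x₂ = P * P ^ (x₂ - 1) := by
          rw [← zpow_one_add]; congr 1; ring
        rw [e0, h1, e1, hCdef]
        group
      have hm : (p : ℤ) ∣ x₂ - 1 := by
        by_contra hnd
        obtain ⟨u, hu⟩ := exists_zpow_inv hp hnd
        have hC := hu C hOC
        have hP := hu P hOP
        rw [key] at hC
        have hCP : C = P := hC.symm.trans hP
        have hQP : Q * P = 1 * P := by rw [one_mul, ← hCdef]; exact hCP
        have hQ1' : Q = 1 := mul_right_cancel hQP
        rw [hQ1', orderOf_one] at hOQ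
        omega
      constructor
      · exact Int.modEq_zero_iff_dvd.mpr hdvd
      · rw [Int.modEq_iff_dvd]
        simpa [neg_sub] using dvd_neg.mpr hm
    · -- q does not divide x₁ : show p ∣ x₂
      left
      have hdp : (p : ℤ) ∣ x₂ := by
        by_contra hnd
        have hnd' : ¬ (p : ℤ) ∣ -x₂ := fun h => hnd (dvd_neg.mp h)
        obtain ⟨u, hu0⟩ := exists_zpow_inv hp hnd'
        obtain ⟨u', hu0'⟩ := exists_zpow_inv hq hdvd
        have hu := hu0 P hOP
        have hu' := hu0' Q hOQ
        have h1 : Commute (Q ^ x₁) (P ^ (-x₂)) := hcomm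
        have h2 : Commute (Q ^ x₁) P := by
          have := h1.zpow_right u
          rwa [hu] at this
        have h4 : Commute Q P := by
          have := h2.zpow_left u'
          rwa [hu'] at this
        -- contradiction by evaluating at q-1
        exact mulQP_ne_mulPQ h3 hqp h4.eq
      -- now P^x₂ = 1, C^x₂ = 1
      have hP1 : P ^ x₂ = 1 := by
        rw [zpow_eq_one_iff_modEq, hOP]; exact Int.modEq_zero_iff_dvd.mpr hdp
      have hPm1 : P ^ (-x₂) = 1 := by
        rw [zpow_neg, hP1, inv_one]
      have hC1 : C ^ x₂ = 1 := by
        rw [zpow_eq_one_iff_modEq, hOC]; exact Int.modEq_zero_iff_dvd.mpr hdp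
      rw [hC1, hPm1, one_mul, mul_one] at E1
      have : Q ^ x₁ = Q ^ (1 : ℤ) := by rw [E1, zpow_one]
      rw [zpow_eq_zpow_iff_modEq, hOQ] at this
      exact ⟨this, Int.modEq_zero_iff_dvd.mpr hdp⟩
  · rintro (⟨h1, h2⟩ | ⟨h1, h2⟩)
    · have hQ1 : Q ^ x₁ = Q := by rw [zpQ x₁ 1 h1, zpow_one]
      have hC0 : C ^ x₂ = 1 := by rw [zpC x₂ 0 h2, zpow_zero]
      have hP0 : P ^ (-x₂) = 1 := by
        rw [zpP (-x₂) 0 (by simpa using h2.neg), zpow_zero]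
      constructor <;> rw [hC0, hQ1, hP0] <;> group
    · have hQ1 : Q ^ x₁ = 1 := by rw [zpQ x₁ 0 h1, zpow_zero]
      have hC1 : C ^ x₂ = C := by rw [zpC x₂ 1 h2, zpow_one]
      have hPm : P ^ (-x₂) = P⁻¹ := by
        rw [zpP (-x₂) (-1) (by simpa using h2.neg), zpow_neg_one]
      constructor <;> rw [hC1, hQ1, hPm, hCdef] <;> group
end

section
/- Let p, q ∈ ℕ be primes with 2 < q < p and let x₁, x₂ ∈ ℤ. If [p]^{−x₂}[q]^{x₁} = [q]^{x₁}[p]^{−x₂} holds in S_p and x₁ ≢ 0 (mod q), then x₂ ≡ 0 (mod p). -/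
/-- Let `p, q` be primes with `2 < q < p` and `x₁, x₂ ∈ ℤ`.
If `[p]^{−x₂}[q]^{x₁} = [q]^{x₁}[p]^{−x₂}` holds in `S_p` (products taken left to
right, so a paper product `a b` is `b * a` in Mathlib's convention
`(f * g) x = f (g x)`) and `x₁ ≢ 0 (mod q)`, then `x₂ ≡ 0 (mod p)`. -/
theorem cyc_commute_imp_modEq (p q : ℕ) (hp : p.Prime) (hq : q.Prime) (h2q : 2 < q)
    (hqp : q < p) (x₁ x₂ : ℤ)
    (hcomm : (cyc p q) ^ x₁ * (cyc p p) ^ (-x₂) = (cyc p p) ^ (-x₂) * (cyc p q) ^ x₁)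
    (hx₁ : ¬ x₁ ≡ 0 [ZMOD (q : ℤ)]) :
    x₂ ≡ 0 [ZMOD (p : ℤ)] := by
  obtain ⟨m, rfl⟩ : ∃ m, p = m + 1 := ⟨p - 1, (Nat.succ_pred_eq_of_pos hp.pos).symm⟩
  have hm : 2 < m + 1 := lt_trans h2q hqp
  have hmlt : m < m + 1 := by omega
  set L : Fin (m + 1) := ⟨m, hmlt⟩ with hL
  set c : Equiv.Perm (Fin (m + 1)) := Fin.cycleRange L with hc
  set d : Equiv.Perm (Fin (m + 1)) := Fin.cycleRange ⟨q - 1, by omega⟩ with hd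
  have hcycP : cyc (m + 1) (m + 1) = c := by
    rw [cyc, dif_pos (by omega : m + 1 - 1 < m + 1)]
    rfl
  have hcycQ : cyc (m + 1) q = d := by
    rw [cyc, dif_pos (by omega : q - 1 < m + 1)]
  rw [hcycP, hcycQ] at hcomm
  -- orders
  have hctype : c.cycleType = {m + 1} := by
    rw [hc, Fin.cycleType_cycleRange (fun h => absurd (congrArg Fin.val h) (by rw [Fin.val_zero]; exact (by omega : m ≠ 0)))]
  have hdtype : d.cycleType = {q} := by
    rw [hd, Fin.cycleType_cycleRange (fun h => absurd (congrArg Fin.val h) (by rw [Fin.val_zero]; exact (by omega : q - 1 ≠ 0)))]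
    congr 1
    simp
    omega
  have horderc : orderOf c = m + 1 := by
    rw [← Equiv.Perm.lcm_cycleType, hctype, Multiset.lcm_singleton, normalize_eq]
  have horderd : orderOf d = q := by
    rw [← Equiv.Perm.lcm_cycleType, hdtype, Multiset.lcm_singleton, normalize_eq]
  -- c moves every point
  have hmove : ∀ z : Fin (m + 1), c z ≠ z := by
    have hcard : c.support.card = m + 1 := by
      rw [← Equiv.Perm.sum_cycleType, hctype, Multiset.sum_singleton]
    have : c.support = Finset.univ := by
      apply Finset.eq_univ_of_card
      simp [hcard]
    intro z
    have : z ∈ c.support := this ▸ Finset.mem_univ z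
    exact Equiv.Perm.mem_support.mp this
  have hlastfix : d (L : Fin (m + 1)) = L := by
    rw [hd]
    exact Fin.cycleRange_of_gt (by rw [Fin.lt_def]; exact (by omega : q - 1 < m))
  have hcyclec : c.IsCycle := by
    rw [hc]; exact Fin.isCycle_cycleRange (fun h => absurd (congrArg Fin.val h) (by rw [Fin.val_zero]; exact (by omega : m ≠ 0)))
  clear_value c d
  clear hc hd hcycP hcycQ
  -- by contradiction
  by_contra hcon
  have hndvd : ¬ ((m + 1 : ℕ) : ℤ) ∣ x₂ := fun hdvd =>
    hcon (Int.modEq_zero_iff_dvd.mpr hdvd)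
  -- coprimality gives c ∈ zpowers of c^(-x₂)
  have hprime : Prime ((m + 1 : ℕ) : ℤ) := Nat.prime_iff_prime_int.mp hp
  have hcop : IsCoprime (-x₂) ((m + 1 : ℕ) : ℤ) :=
    ((hprime.coprime_iff_not_dvd.mpr hndvd).symm).neg_left
  obtain ⟨a, b, hab⟩ := hcop
  have hcp1 : c ^ (((m + 1 : ℕ) : ℤ)) = 1 := by
    rw [zpow_natCast]
    exact orderOf_dvd_iff_pow_eq_one.mp (by rw [horderc])
  have hkey : (c ^ (-x₂)) ^ a = c := by
    rw [← zpow_mul]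
    have : -x₂ * a = 1 - ((m + 1 : ℕ) : ℤ) * b := by linarith [hab]
    rw [this, zpow_sub, zpow_one, zpow_mul, hcp1, one_zpow, inv_one, mul_one]
  -- commutation with c
  have hcd : Commute (d ^ x₁) (c ^ (-x₂)) := hcomm
  have hcom : Commute (d ^ x₁) c := by
    rw [← hkey]
    exact hcd.zpow_right a
  -- d^x₁ fixes the last point
  have hfix : (d ^ x₁) (L : Fin (m + 1)) = L :=
    Equiv.Perm.zpow_apply_eq_self_of_apply_eq_self hlastfix x₁
  -- d^x₁ = 1
  have hone : d ^ x₁ = 1 := by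
    apply Equiv.ext
    intro z
    simp only [Equiv.Perm.coe_one, id_eq]
    obtain ⟨k, hk⟩ := hcyclec.exists_zpow_eq (hmove L) (hmove z)
    have hck := Equiv.ext_iff.mp (hcom.zpow_right k).eq
    simp only [Equiv.Perm.mul_apply] at hck
    rw [← hk, hck, hfix]
  -- contradiction with hx₁
  have : ((q : ℕ) : ℤ) ∣ x₁ := by
    rw [← horderd]
    exact orderOf_dvd_iff_zpow_eq_one.mpr hone
  exact hx₁ (Int.modEq_zero_iff_dvd.mpr this)
end

section
/- Let p be a prime, let q be odd with 1 < q < p, and let x ∈ ℤ. If [p]^x = ([p][q])^x holds in the symmetric group S_p, then x ≡ 0 (mod p). -/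
open Fin.NatCast

set_option maxHeartbeats 1000000 in
/-- Let `p` be a prime, `q` odd with `1 < q < p`, and `x ∈ ℤ`.
If `[p]^x = ([p][q])^x` holds in `S_p` (products taken left to right, so the paper
product `[p][q]` is `cyc p q * cyc p p` in Mathlib's convention
`(f * g) x = f (g x)`), then `x ≡ 0 (mod p)`. -/
theorem cyc_pow_eq_imp_modEq (p q : ℕ) (hp : p.Prime) (hq_odd : Odd q) (h1q : 1 < q)
    (hqp : q < p) (x : ℤ)
    (heq : (cyc p p) ^ x = (cyc p q * cyc p p) ^ x) :
    x ≡ 0 [ZMOD (p : ℤ)] := by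
  have hq3 : 3 ≤ q := by obtain ⟨a, ha⟩ := hq_odd; omega
  have hqp1 : q + 1 < p := by
    have hpodd : Odd p := hp.odd_of_ne_two (by omega)
    obtain ⟨a, ha⟩ := hq_odd; obtain ⟨b, hb⟩ := hpodd; omega
  obtain ⟨m, rfl⟩ : ∃ m, p = m + 2 := ⟨p - 2, by omega⟩
  set c := cyc (m + 2) (m + 2) with hc
  set σ := cyc (m + 2) q * c with hσ
  clear_value σ c
  have hcapp : ∀ i : Fin (m + 2), c i = i + 1 := by
    intro i
    have h1 : (m + 2) - 1 < m + 2 := by omega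
    have h2 : cyc (m + 2) (m + 2) = Fin.cycleRange (⟨(m + 2) - 1, h1⟩ : Fin (m + 2)) :=
      dif_pos h1
    rw [hc, h2]
    have h3 : (⟨(m + 2) - 1, h1⟩ : Fin (m + 2)) = Fin.last (m + 1) := rfl
    rw [h3, Fin.cycleRange_last, finRotate_succ_apply]
  have hcpow : ∀ (k : ℕ) (i : Fin (m + 2)), (c ^ k) i = i + (k : Fin (m + 2)) := by
    intro k
    induction k with
    | zero => intro i; simp
    | succ k ih =>
      intro i
      rw [pow_succ', Equiv.Perm.mul_apply, hcapp, ih]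
      push_cast
      rw [add_assoc]
  have hcP : c ^ (m + 2) = 1 := by
    ext i
    rw [hcpow]
    simp [Fin.natCast_self]
  by_contra hx
  have hxmod : x % ((m + 2 : ℕ) : ℤ) ≠ 0 :=
    fun h => hx (Int.modEq_zero_iff_dvd.mpr (Int.dvd_of_emod_eq_zero h))
  have hnn : (0:ℤ) ≤ x % ((m + 2 : ℕ):ℤ) := Int.emod_nonneg x (by positivity)
  have hnlt : x % ((m + 2 : ℕ):ℤ) < ((m + 2 : ℕ):ℤ) := Int.emod_lt_of_pos x (by positivity)
  obtain ⟨n, hn0, hnP, hcast⟩ :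
      ∃ n : ℕ, 0 < n ∧ n < m + 2 ∧ ((n : ℤ)) = x % ((m + 2 : ℕ):ℤ) :=
    ⟨(x % ((m + 2 : ℕ):ℤ)).toNat, by omega, by omega, Int.toNat_of_nonneg hnn⟩
  have hzx : c ^ x = c ^ n := by
    conv_lhs => rw [← Int.mul_ediv_add_emod x ((m + 2 : ℕ):ℤ)]
    rw [zpow_add, zpow_mul, zpow_natCast, hcP, one_zpow, one_mul, ← hcast, zpow_natCast]
  have hcomm : Commute σ (c ^ n) := by
    rw [← hzx, heq]
    exact (Commute.refl σ).zpow_right x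
  have hq1 : q - 1 < m + 2 := by omega
  have hcycq : cyc (m + 2) q = Fin.cycleRange (⟨q - 1, hq1⟩ : Fin (m + 2)) := dif_pos hq1
  -- σ 0 = 2
  have hσ0 : σ (⟨0, by omega⟩ : Fin (m + 2)) = ⟨2, by omega⟩ := by
    rw [hσ, Equiv.Perm.mul_apply, hcapp, hcycq]
    have h01 : (⟨0, by omega⟩ : Fin (m + 2)) + 1 = ⟨1, by omega⟩ := by
      apply Fin.ext
      simp [Fin.add_def]
    rw [h01, Fin.cycleRange_of_lt (show (⟨1, by omega⟩ : Fin (m + 2)) < ⟨q-1, hq1⟩ by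
      simp only [Fin.lt_def]; omega)]
    apply Fin.ext
    simp only [Fin.add_def, Fin.val_one]
    rw [Nat.mod_eq_of_lt (show 1 + 1 < m + 2 by omega)]
  -- σ (q-1) = q
  have hσq : σ (⟨q - 1, hq1⟩ : Fin (m + 2)) = ⟨q, by omega⟩ := by
    rw [hσ, Equiv.Perm.mul_apply, hcapp, hcycq]
    have h1 : (⟨q - 1, hq1⟩ : Fin (m + 2)) + 1 = ⟨q, by omega⟩ := by
      apply Fin.ext
      simp only [Fin.add_def, Fin.val_one]
      rw [show q - 1 + 1 = q by omega, Nat.mod_eq_of_lt (show q < m + 2 by omega)]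
    rw [h1, Fin.cycleRange_of_gt (show (⟨q-1, hq1⟩ : Fin (m + 2)) < ⟨q, by omega⟩ by
      simp only [Fin.lt_def]; omega)]
  -- choose j with n * j ≡ q - 1 mod (m+2), using Fermat's little theorem
  have hcop : Nat.Coprime n (m + 2) := by
    apply Nat.Coprime.symm
    refine (Nat.Prime.coprime_iff_not_dvd hp).mpr fun h => ?_
    have := Nat.le_of_dvd hn0 h
    omega
  have hfermat : n ^ ((m + 2) - 1) ≡ 1 [MOD (m + 2)] := by
    have ht := Nat.ModEq.pow_totient hcop
    rwa [Nat.totient_prime hp] at ht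
  obtain ⟨j, hjm'⟩ : ∃ j : ℕ, (n * j) % (m + 2) = q - 1 := by
    refine ⟨(q - 1) * n ^ ((m + 2) - 2), ?_⟩
    have key : n * ((q - 1) * n ^ ((m + 2) - 2)) = (q - 1) * n ^ ((m + 2) - 1) := by
      rw [show (m + 2) - 1 = (m + 2) - 2 + 1 by omega, pow_succ]
      ring
    have hjm : n * ((q - 1) * n ^ ((m + 2) - 2)) ≡ (q - 1) * 1 [MOD (m + 2)] := by
      rw [key]
      exact Nat.ModEq.mul_left _ hfermat
    rw [Nat.ModEq] at hjm
    rw [hjm, Nat.mul_one, Nat.mod_eq_of_lt hq1]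
  -- evaluate commutation at 0
  have hcnj : ∀ i : Fin (m + 2), ((c ^ n) ^ j) i = i + ((n * j : ℕ) : Fin (m + 2)) := by
    intro i
    rw [← pow_mul]
    rw [hcpow]
  have e2 : ((c ^ n) ^ j) (⟨0, by omega⟩ : Fin (m + 2)) = (⟨q - 1, hq1⟩ : Fin (m + 2)) := by
    rw [hcnj]
    apply Fin.ext
    simp only [Fin.add_def, Fin.val_natCast]
    rw [hjm']
    rw [Nat.mod_eq_of_lt (show 0 + (q - 1) < m + 2 by omega)]
    omega
  have e3 : σ (((c ^ n) ^ j) (⟨0, by omega⟩ : Fin (m + 2)))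
      = ((c ^ n) ^ j) (σ (⟨0, by omega⟩ : Fin (m + 2))) := by
    have h := DFunLike.congr_fun ((hcomm.pow_right j).eq) (⟨0, by omega⟩ : Fin (m + 2))
    simpa only [Equiv.Perm.mul_apply] using h
  rw [e2, hσq, hσ0] at e3
  rw [hcnj] at e3
  apply_fun Fin.val at e3
  simp only [Fin.add_def, Fin.val_natCast] at e3
  rw [hjm'] at e3
  rw [Nat.mod_eq_of_lt (show 2 + (q - 1) < m + 2 by omega)] at e3
  omega
end

section
/- Let m, d ≥ 1 and let α : {1,…,d} × {1,2,3} → {1,…,m} be a map such that α(i,1), α(i,2), α(i,3) are pairwise distinct for every 1 ≤ i ≤ d. Let p₁,…,p_m, r₁,…,r_m, q₁,…,q_d be pairwise distinct odd primes such that p_j > r_j > 2 and p_j > q_i > 2 for all 1 ≤ i ≤ d and 1 ≤ j ≤ m, and set P = max_{1 ≤ j ≤ m} p_j. Work in the group G = ∏_{j=1}^{m} V_j × ∏_{i=1}^{d} C_i, where V_j = S_{p_j} × S_{p_j} × ℤ/p_jℤ × ℤ/p_jℤ × ℤ/r_jℤ and C_i = ℤ/q_iℤ × S_P × S_P × S_P.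 Define g = (v₁,…,v_m, c₁,…,c_d) and g_k = (v_{k,1},…,v_{k,m}, c_{k,1},…,c_{k,d}) for k = 1,2,3, where v_j = ([r_j], [r_j], 0, 0, 0), c_i = (1, id, id, id), v_{1,j} = ([r_j], [p_j]^{−1}, 1, 1, 1), c_{1,i} = (1, [q_i]^{−1}, [p_{α(i,2)}]^{−1}, [q_i][p_{α(i,3)}]), v_{2,j} = ([p_j]^{−1}, [r_j], −1, 0, −1), c_{2,i} = (1, [q_i][p_{α(i,1)}], [q_i]^{−1}, [p_{α(i,3)}]^{−1}), v_{3,j} = ([p_j][r_j], [p_j][r_j], 0, −1, 0), c_{3,i} = (1, [p_{α(i,1)}]^{−1}, [q_i][p_{α(i,2)}], [q_i]^{−1}). Then there exists a subset A' ⊆ {1,…,m} such that |A' ∩ {α(i,1), α(i,2), α(i,3)}| = 1 for every 1 ≤ i ≤ d if and only if there exist z₁, z₂, z₃ ∈ ℤ with g = g₁^{z₁} g₂^{z₂} g₃^{z₃} in G. -/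
/-- The group `V_j = S_{p_j} × S_{p_j} × ℤ/p_jℤ × ℤ/p_jℤ × ℤ/r_jℤ` (the additively
written cyclic groups are wrapped in `Multiplicative` so that the direct product is a
multiplicative group). -/
abbrev Vgrp (p r : ℕ) : Type :=
  Equiv.Perm (Fin p) × Equiv.Perm (Fin p) × Multiplicative (ZMod p) ×
    Multiplicative (ZMod p) × Multiplicative (ZMod r)

/-- The group `C_i = ℤ/q_iℤ × S_P × S_P × S_P`. -/
abbrev Cgrp (q P : ℕ) : Type :=
  Multiplicative (ZMod q) × Equiv.Perm (Fin P) × Equiv.Perm (Fin P) × Equiv.Perm (Fin P)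

/-- The group `G = ∏_j V_j × ∏_i C_i`. -/
abbrev Ggrp (m d : ℕ) (p r : Fin m → ℕ) (q : Fin d → ℕ) (P : ℕ) : Type :=
  (∀ j : Fin m, Vgrp (p j) (r j)) × (∀ i : Fin d, Cgrp (q i) P)

/-- The target element `g = (v₁,…,v_m,c₁,…,c_d)` with `v_j = ([r_j],[r_j],0,0,0)` and
`c_i = (1,id,id,id)`. -/
def gTarget (m d : ℕ) (p r : Fin m → ℕ) (q : Fin d → ℕ) (P : ℕ) :
    Ggrp m d p r q P :=
  (fun j => (cyc (p j) (r j), cyc (p j) (r j),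
      Multiplicative.ofAdd (0 : ZMod (p j)), Multiplicative.ofAdd (0 : ZMod (p j)),
      Multiplicative.ofAdd (0 : ZMod (r j))),
   fun i => (Multiplicative.ofAdd (1 : ZMod (q i)), 1, 1, 1))

/-- The element `g₁` with `v_{1,j} = ([r_j],[p_j]⁻¹,1,1,1)` and
`c_{1,i} = (1,[q_i]⁻¹,[p_{α(i,2)}]⁻¹,[q_i][p_{α(i,3)}])`. (Products of permutations
are taken left to right in the paper, so a paper product `a b` is `b * a` in Mathlib's
convention `(f * g) x = f (g x)`; `α` is 0-indexed, so `α(i,k)` is `α i (k-1)`.) -/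
def gOne (m d : ℕ) (p r : Fin m → ℕ) (q : Fin d → ℕ) (α : Fin d → Fin 3 → Fin m)
    (P : ℕ) : Ggrp m d p r q P :=
  (fun j => (cyc (p j) (r j), (cyc (p j) (p j))⁻¹,
      Multiplicative.ofAdd (1 : ZMod (p j)), Multiplicative.ofAdd (1 : ZMod (p j)),
      Multiplicative.ofAdd (1 : ZMod (r j))),
   fun i => (Multiplicative.ofAdd (1 : ZMod (q i)),
      (cyc P (q i))⁻¹,
      (cyc P (p (α i 1)))⁻¹,
      cyc P (p (α i 2)) * cyc P (q i)))

/-- The element `g₂` with `v_{2,j} = ([p_j]⁻¹,[r_j],−1,0,−1)` and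
`c_{2,i} = (1,[q_i][p_{α(i,1)}],[q_i]⁻¹,[p_{α(i,3)}]⁻¹)`. -/
def gTwo (m d : ℕ) (p r : Fin m → ℕ) (q : Fin d → ℕ) (α : Fin d → Fin 3 → Fin m)
    (P : ℕ) : Ggrp m d p r q P :=
  (fun j => ((cyc (p j) (p j))⁻¹, cyc (p j) (r j),
      Multiplicative.ofAdd (-1 : ZMod (p j)), Multiplicative.ofAdd (0 : ZMod (p j)),
      Multiplicative.ofAdd (-1 : ZMod (r j))),
   fun i => (Multiplicative.ofAdd (1 : ZMod (q i)),
      cyc P (p (α i 0)) * cyc P (q i),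
      (cyc P (q i))⁻¹,
      (cyc P (p (α i 2)))⁻¹))

/-- The element `g₃` with `v_{3,j} = ([p_j][r_j],[p_j][r_j],0,−1,0)` and
`c_{3,i} = (1,[p_{α(i,1)}]⁻¹,[q_i][p_{α(i,2)}],[q_i]⁻¹)`. -/
def gThree (m d : ℕ) (p r : Fin m → ℕ) (q : Fin d → ℕ) (α : Fin d → Fin 3 → Fin m)
    (P : ℕ) : Ggrp m d p r q P :=
  (fun j => (cyc (p j) (r j) * cyc (p j) (p j), cyc (p j) (r j) * cyc (p j) (p j),
      Multiplicative.ofAdd (0 : ZMod (p j)), Multiplicative.ofAdd (-1 : ZMod (p j)),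
      Multiplicative.ofAdd (0 : ZMod (r j))),
   fun i => (Multiplicative.ofAdd (1 : ZMod (q i)),
      (cyc P (p (α i 0)))⁻¹,
      cyc P (p (α i 1)) * cyc P (q i),
      (cyc P (q i))⁻¹))


section KnapsackAux

def cycF (n x : ℕ) : ℕ := if x < n - 1 then x + 1 else if x = n - 1 then 0 else x

lemma cyc_val_s10 {N n : ℕ} (hn : 1 ≤ n) (hnN : n ≤ N) (x : Fin N) :
    ((cyc N n) x : ℕ) = cycF n (x : ℕ) := by
  obtain ⟨N', rfl⟩ : ∃ N', N = N' + 1 := ⟨N - 1, by omega⟩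
  have h : n - 1 < N' + 1 := by omega
  rw [cyc, dif_pos h, Fin.cycleRange_apply, cycF]
  have hlt : (x < (⟨n - 1, h⟩ : Fin (N' + 1))) ↔ ((x : ℕ) < n - 1) := Iff.rfl
  have heq : (x = (⟨n - 1, h⟩ : Fin (N' + 1))) ↔ ((x : ℕ) = n - 1) := Fin.ext_iff
  split_ifs with h1 h2 <;> simp_all
  · exact Fin.val_add_one_of_lt (by rw [Fin.lt_iff_val_lt_val, Fin.val_last]; omega)

lemma cyc_pow_val {N n : ℕ} (hn : 1 ≤ n) (hnN : n ≤ N) (k : ℕ) (x : Fin N) :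
    (((cyc N n) ^ k) x : ℕ) = if (x : ℕ) < n then ((x : ℕ) + k) % n else (x : ℕ) := by
  induction k generalizing x with
  | zero =>
    simp only [pow_zero, Equiv.Perm.one_apply]
    split_ifs with h
    · exact (Nat.mod_eq_of_lt h).symm
    · rfl
  | succ k ih =>
    rw [pow_succ, Equiv.Perm.mul_apply, ih]
    have hv := cyc_val_s10 hn hnN x
    rw [cycF] at hv
    rcases lt_trichotomy (x : ℕ) (n - 1) with h | h | h
    · rw [if_pos h] at hv
      rw [hv, if_pos (by omega : (x:ℕ) + 1 < n), if_pos (by omega : (x:ℕ) < n),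
        show (x:ℕ) + 1 + k = (x:ℕ) + (k + 1) from by omega]
    · rw [if_neg (by omega), if_pos h] at hv
      rw [hv, if_pos (by omega : (0:ℕ) < n), if_pos (by omega : (x:ℕ) < n),
        show (x:ℕ) + (k + 1) = n + k from by omega, Nat.zero_add, Nat.add_mod_left]
    · rw [if_neg (by omega), if_neg (by omega)] at hv
      rw [hv, if_neg (by omega), if_neg (by omega)]

lemma cyc_pow_n {N n : ℕ} (hn : 1 ≤ n) (hnN : n ≤ N) : (cyc N n) ^ n = 1 := by
  ext x
  rw [cyc_pow_val hn hnN]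
  split_ifs with h
  · simp [Nat.add_mod_right, Nat.mod_eq_of_lt h]
  · rfl

lemma cyc_ne_one {N n : ℕ} (hn : 2 ≤ n) (hnN : n ≤ N) : cyc N n ≠ 1 := by
  intro h
  have h0 : ((cyc N n) ⟨0, by omega⟩ : ℕ) = 1 := by
    rw [cyc_val_s10 (by omega) hnN, cycF]; simp; omega
  rw [h] at h0
  simp at h0

lemma orderOf_cyc_s10 {N n : ℕ} (hp : n.Prime) (hnN : n ≤ N) : orderOf (cyc N n) = n := by
  have : Fact n.Prime := ⟨hp⟩
  exact orderOf_eq_prime (cyc_pow_n hp.one_le hnN) (cyc_ne_one hp.two_le hnN)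

lemma zpow_congr {G : Type*} [Group G] {g : G} {M : ℕ} (h : g ^ M = 1) {x y : ℤ}
    (hxy : (M : ℤ) ∣ x - y) : g ^ x = g ^ y := by
  obtain ⟨k, hk⟩ := hxy
  have hx : x = y + (M : ℤ) * k := by linarith
  rw [hx, zpow_add, zpow_mul, zpow_natCast, h, one_zpow, mul_one]

lemma cyc_zpow_eq_one_iff {N n : ℕ} (hp : n.Prime) (hnN : n ≤ N) (x : ℤ) :
    (cyc N n) ^ x = 1 ↔ (n : ℤ) ∣ x := by
  have : Fact n.Prime := ⟨hp⟩
  rw [← orderOf_dvd_iff_zpow_eq_one, orderOf_cyc_s10 hp hnN]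

/-- `orbA n p k` : the `k`-th element of the orbit of `0` under `cyc N n * cyc N p`. -/
def orbA (n p k : ℕ) : ℕ :=
  if k < (n - 1) / 2 then 2 * k
  else if k < p - (n - 1) / 2 then k + (n - 1) / 2
  else 2 * (k - (p - (n - 1) / 2)) + 1

lemma orbA_lt {n p : ℕ} (hn3 : 3 ≤ n) (hodd : n % 2 = 1) (hnp : n < p) {k : ℕ}
    (hk : k < p) : orbA n p k < p := by
  unfold orbA; split_ifs <;> omega

lemma orbA_zero {n p : ℕ} (hn3 : 3 ≤ n) : orbA n p 0 = 0 := by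
  unfold orbA; split_ifs <;> omega

lemma orbA_step {n p : ℕ} (hn3 : 3 ≤ n) (hodd : n % 2 = 1) (hnp : n < p) {k : ℕ}
    (hk : k < p) : cycF n (cycF p (orbA n p k)) = orbA n p ((k + 1) % p) := by
  rcases Nat.lt_or_ge (k + 1) p with h | h
  · rw [Nat.mod_eq_of_lt h]
    unfold orbA cycF
    split_ifs <;> omega
  · have hk1 : k + 1 = p := by omega
    rw [hk1, Nat.mod_self]
    unfold orbA cycF
    split_ifs <;> omega

lemma orbA_surj {n p : ℕ} (hn3 : 3 ≤ n) (hodd : n % 2 = 1) (hnp : n < p) {y : ℕ}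
    (hy : y < p) : ∃ k, k < p ∧ orbA n p k = y := by
  refine ⟨if y < n - 1 then (if y % 2 = 0 then y / 2 else p - (n - 1) / 2 + y / 2)
    else y - (n - 1) / 2, ?_, ?_⟩
  · split_ifs <;> omega
  · unfold orbA; split_ifs <;> omega

lemma orbA_eq_cycF {n p : ℕ} (hn3 : 3 ≤ n) (hodd : n % 2 = 1) (hnp : n < p) {e : ℕ}
    (he : e < p) (h : orbA n p e = cycF n e) : e = 1 := by
  unfold orbA cycF at h; split_ifs at h <;> omega

section AA
variable {N n p : ℕ} (hn3 : 3 ≤ n) (hodd : n % 2 = 1) (hnp : n < p) (hpN : p ≤ N)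

lemma cycF_fix {n x : ℕ} (hx : n ≤ x) : cycF n x = x := by
  unfold cycF; split_ifs <;> omega

include hn3 hnp hpN

lemma AA_apply_val (x : Fin N) :
    ((cyc N n * cyc N p) x : ℕ) = cycF n (cycF p (x : ℕ)) := by
  rw [Equiv.Perm.mul_apply, cyc_val_s10 (by omega) (le_trans (by omega) hpN),
    cyc_val_s10 (by omega) hpN]

include hodd

lemma AA_pow_zero_val (k : ℕ) :
    (((cyc N n * cyc N p) ^ k) ⟨0, by omega⟩ : ℕ) = orbA n p (k % p) := by
  induction k with
  | zero =>
    simp only [pow_zero, Equiv.Perm.one_apply]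
    rw [Nat.zero_mod, orbA_zero hn3]
  | succ k ih =>
    rw [pow_succ', Equiv.Perm.mul_apply]
    have := AA_apply_val hn3 hnp hpN (((cyc N n * cyc N p) ^ k) ⟨0, by omega⟩)
    rw [this, ih, orbA_step hn3 hodd hnp (Nat.mod_lt _ (by omega : 0 < p)),
      Nat.add_mod k 1 p, Nat.mod_eq_of_lt (by omega : 1 < p)]

lemma AA_pow_p : (cyc N n * cyc N p) ^ p = 1 := by
  have hfix : ∀ x : Fin N, p ≤ (x : ℕ) → (cyc N n * cyc N p) x = x := by
    intro x hx
    apply Fin.ext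
    rw [AA_apply_val hn3 hnp hpN, cycF_fix (by omega : p ≤ (x:ℕ)),
      cycF_fix (by omega : n ≤ (x:ℕ))]
  refine Equiv.Perm.ext fun x => ?_
  rw [Equiv.Perm.one_apply]
  rcases Nat.lt_or_ge (x : ℕ) p with hx | hx
  · obtain ⟨k, hk, hok⟩ := orbA_surj hn3 hodd hnp hx
    have hxk : ((cyc N n * cyc N p) ^ k) ⟨0, by omega⟩ = x := by
      apply Fin.ext
      rw [AA_pow_zero_val hn3 hodd hnp hpN, Nat.mod_eq_of_lt hk, hok]
    have h0 : ((cyc N n * cyc N p) ^ p) ⟨0, by omega⟩ = ⟨0, by omega⟩ := by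
      apply Fin.ext
      rw [AA_pow_zero_val hn3 hodd hnp hpN, Nat.mod_self, orbA_zero hn3]
    have hcomm : ((cyc N n * cyc N p) ^ p) * ((cyc N n * cyc N p) ^ k)
        = ((cyc N n * cyc N p) ^ k) * ((cyc N n * cyc N p) ^ p) := by
      rw [← pow_add, ← pow_add, Nat.add_comm]
    rw [← hxk, ← Equiv.Perm.mul_apply, hcomm, Equiv.Perm.mul_apply, h0]
  · have : ∀ j : ℕ, ((cyc N n * cyc N p) ^ j) x = x := by
      intro j
      induction j with
      | zero => rfl
      | succ j ihj => rw [pow_succ, Equiv.Perm.mul_apply, hfix x hx, ihj]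
    simpa using this p

lemma AA_ne_one : cyc N n * cyc N p ≠ 1 := by
  intro h
  have h2 : ((cyc N n * cyc N p) ⟨0, by omega⟩ : ℕ) = 2 := by
    rw [AA_apply_val hn3 hnp hpN]
    show cycF n (cycF p 0) = 2
    unfold cycF
    split_ifs <;> omega
  rw [h] at h2
  simp at h2

lemma AA_zpow_eq_one_iff (hp : p.Prime) (x : ℤ) :
    (cyc N n * cyc N p) ^ x = 1 ↔ (p : ℤ) ∣ x := by
  have : Fact p.Prime := ⟨hp⟩
  rw [← orderOf_dvd_iff_zpow_eq_one,
    orderOf_eq_prime (AA_pow_p hn3 hodd hnp hpN) (AA_ne_one hn3 hodd hnp hpN)]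

end AA

lemma mod_two_lt {a b : ℕ} (hb : 0 < b) (h : a < 2 * b) :
    a % b = if a < b then a else a - b := by
  split_ifs with h1
  · exact Nat.mod_eq_of_lt h1
  · rw [Nat.mod_eq_sub_mod (by omega), Nat.mod_eq_of_lt (by omega)]

lemma commute_contra {N n p : ℕ} (hn3 : 3 ≤ n) (hnp : n < p) (hpN : p ≤ N)
    {e f : ℕ} (he : 1 ≤ e) (hep : e < p) (hf : 1 ≤ f) (hfn : f < n)
    (h : (cyc N n) ^ f * (cyc N p) ^ e = (cyc N p) ^ e * (cyc N n) ^ f) : False := by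
  have hn1 : 1 ≤ n := by omega
  have hp1 : 1 ≤ p := by omega
  have hnN : n ≤ N := by omega
  have key : ∀ x : Fin N, ((cyc N n) ^ f) (((cyc N p) ^ e) x)
      = ((cyc N p) ^ e) (((cyc N n) ^ f) x) := by
    intro x
    rw [← Equiv.Perm.mul_apply, ← Equiv.Perm.mul_apply, h]
  rcases Nat.lt_or_ge (p - n) e with hcase | hcase
  · -- e > p - n
    rcases Nat.lt_or_ge (e - 1) n with hsub | hsub
    · -- use point p - 1
      have hx := key ⟨p - 1, by omega⟩
      have hv : (((cyc N p) ^ e) ⟨p - 1, by omega⟩ : ℕ) = e - 1 := by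
        rw [cyc_pow_val hp1 hpN, if_pos (by simp; omega)]
        show (p - 1 + e) % p = e - 1
        rw [mod_two_lt (by omega) (by omega)]
        split_ifs <;> omega
      have hw : (((cyc N n) ^ f) ⟨p - 1, by omega⟩ : ℕ) = p - 1 := by
        rw [cyc_pow_val hn1 hnN, if_neg (by simp; omega)]
      have h1 : (((cyc N n) ^ f) (((cyc N p) ^ e) ⟨p - 1, by omega⟩) : ℕ) = (e - 1 + f) % n := by
        rw [cyc_pow_val hn1 hnN, if_pos (by rw [hv]; omega), hv]
      have h2 : (((cyc N p) ^ e) (((cyc N n) ^ f) ⟨p - 1, by omega⟩) : ℕ) = e - 1 := by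
        rw [cyc_pow_val hp1 hpN, if_pos (by rw [hw]; omega), hw]
        show (p - 1 + e) % p = e - 1
        rw [mod_two_lt (by omega) (by omega)]
        split_ifs <;> omega
      rw [hx] at h1
      rw [h2, mod_two_lt (by omega) (by omega)] at h1
      split_ifs at h1 <;> omega
    · -- use point p + n - 1 - e
      have hxval : p + n - 1 - e < N := by omega
      have hx := key ⟨p + n - 1 - e, hxval⟩
      have hv : (((cyc N p) ^ e) ⟨p + n - 1 - e, hxval⟩ : ℕ) = n - 1 := by
        rw [cyc_pow_val hp1 hpN, if_pos (by simp; omega)]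
        show (p + n - 1 - e + e) % p = n - 1
        rw [show p + n - 1 - e + e = p + (n - 1) from by omega, Nat.add_mod_left,
          Nat.mod_eq_of_lt (by omega)]
      have hw : (((cyc N n) ^ f) ⟨p + n - 1 - e, hxval⟩ : ℕ) = p + n - 1 - e := by
        rw [cyc_pow_val hn1 hnN, if_neg (by simp; omega)]
      have h1 : (((cyc N n) ^ f) (((cyc N p) ^ e) ⟨p + n - 1 - e, hxval⟩) : ℕ) = f - 1 := by
        rw [cyc_pow_val hn1 hnN, if_pos (by rw [hv]; omega), hv]
        rw [show n - 1 + f = n + (f - 1) from by omega, Nat.add_mod_left,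
          Nat.mod_eq_of_lt (by omega)]
      have h2 : (((cyc N p) ^ e) (((cyc N n) ^ f) ⟨p + n - 1 - e, hxval⟩) : ℕ) = n - 1 := by
        rw [cyc_pow_val hp1 hpN, if_pos (by rw [hw]; omega), hw]
        rw [show p + n - 1 - e + e = p + (n - 1) from by omega, Nat.add_mod_left,
          Nat.mod_eq_of_lt (by omega)]
      rw [hx] at h1
      omega
  · -- e ≤ p - n : use point n - 1
    have hx := key ⟨n - 1, by omega⟩
    have hv : (((cyc N p) ^ e) ⟨n - 1, by omega⟩ : ℕ) = n - 1 + e := by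
      rw [cyc_pow_val hp1 hpN, if_pos (by simp; omega)]
      show (n - 1 + e) % p = n - 1 + e
      exact Nat.mod_eq_of_lt (by omega)
    have hw : (((cyc N n) ^ f) ⟨n - 1, by omega⟩ : ℕ) = f - 1 := by
      rw [cyc_pow_val hn1 hnN, if_pos (by simp; omega)]
      show (n - 1 + f) % n = f - 1
      rw [show n - 1 + f = n + (f - 1) from by omega, Nat.add_mod_left,
        Nat.mod_eq_of_lt (by omega)]
    have h1 : (((cyc N n) ^ f) (((cyc N p) ^ e) ⟨n - 1, by omega⟩) : ℕ) = n - 1 + e := by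
      rw [cyc_pow_val hn1 hnN, if_neg (by rw [hv]; omega), hv]
    have h2 : (((cyc N p) ^ e) (((cyc N n) ^ f) ⟨n - 1, by omega⟩) : ℕ) = f - 1 + e := by
      rw [cyc_pow_val hp1 hpN, if_pos (by rw [hw]; omega), hw]
      exact Nat.mod_eq_of_lt (by omega)
    rw [hx] at h1
    omega

lemma emod_toNat (a : ℤ) (p : ℕ) (hp : 0 < p) :
    ((a % (p:ℤ)).toNat : ℤ) = a % (p:ℤ) :=
  Int.toNat_of_nonneg (Int.emod_nonneg a (by exact_mod_cast hp.ne'))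

lemma emod_toNat_lt (a : ℤ) {p : ℕ} (hp : 0 < p) : (a % (p:ℤ)).toNat < p := by
  have h1 := Int.emod_lt_of_pos a (by exact_mod_cast hp : (0:ℤ) < p)
  omega

lemma dvd_sub_emod (a : ℤ) (p : ℕ) (hp : 0 < p) :
    (p:ℤ) ∣ a - ((a % (p:ℤ)).toNat : ℤ) := by
  rw [emod_toNat a p hp]
  exact ⟨a / p, by rw [Int.emod_def]; ring⟩

lemma dvd_shift {p : ℤ} {a b x y : ℤ} (h1 : p ∣ a - x) (h2 : p ∣ a - b)
    (hxy : x = y) : p ∣ b - y := by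
  subst hxy
  have := Int.dvd_sub h1 h2
  rw [show a - x - (a - b) = b - x from by ring] at this
  exact this

lemma zpow_eq_one_of {G : Type*} [Group G] {g : G} {M : ℕ} (h : g ^ M = 1) {x : ℤ}
    (hx : (M:ℤ) ∣ x) : g ^ x = 1 := by
  have := zpow_congr h (y := 0) (by simpa using hx)
  simpa using this

lemma V_iff {N n p : ℕ} (hn3 : 3 ≤ n) (hodd : n % 2 = 1) (hnp : n < p) (hpN : p ≤ N)
    (hp : p.Prime) (hn : n.Prime) {a b c : ℤ}
    (hab : (p:ℤ) ∣ a - b) (hac : (p:ℤ) ∣ a - c) (hab' : (n:ℤ) ∣ a - b) :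
    ((cyc N n = (cyc N n * cyc N p) ^ c * ((cyc N p)⁻¹) ^ b * (cyc N n) ^ a) ∧
     (cyc N n = (cyc N n * cyc N p) ^ c * (cyc N n) ^ b * ((cyc N p)⁻¹) ^ a)) ↔
    (((p:ℤ) ∣ a - 1 ∧ (n:ℤ) ∣ a) ∨ ((p:ℤ) ∣ a ∧ (n:ℤ) ∣ a - 1)) := by
  have hn1 : 1 ≤ n := by omega
  have hp1 : 1 ≤ p := by omega
  have hnN : n ≤ N := by omega
  have hApow : (cyc N n * cyc N p) ^ p = 1 := AA_pow_p hn3 hodd hnp hpN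
  have hTpow : (cyc N p) ^ p = 1 := cyc_pow_n hp1 hpN
  have hSpow : (cyc N n) ^ n = 1 := cyc_pow_n hn1 hnN
  constructor
  · rintro ⟨h1, h2⟩
    rw [inv_zpow, ← zpow_neg] at h1 h2
    set e : ℕ := ((a % (p:ℤ)).toNat) with hedef
    set f : ℕ := ((a % (n:ℤ)).toNat) with hfdef
    have hae : (p:ℤ) ∣ a - e := dvd_sub_emod a p hp1
    have haf : (n:ℤ) ∣ a - f := dvd_sub_emod a n hn1
    have hep : e < p := emod_toNat_lt a hp1
    have hfn : f < n := emod_toNat_lt a hn1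
    have hbe : (p:ℤ) ∣ b - e := dvd_shift hae hab rfl
    have hce : (p:ℤ) ∣ c - e := dvd_shift hae hac rfl
    have hbf : (n:ℤ) ∣ b - f := dvd_shift haf hab' rfl
    have hE : (cyc N p) ^ (-b) * (cyc N n) ^ a = (cyc N n) ^ b * (cyc N p) ^ (-a) :=
      mul_left_cancel (h1.symm.trans h2)
    have hta : (cyc N p) ^ (-a) = (cyc N p) ^ (-b) :=
      zpow_congr hTpow (by rw [show -a - -b = -(a-b) from by ring]; exact hab.neg_right)
    have hsa : (cyc N n) ^ a = (cyc N n) ^ (f:ℤ) := zpow_congr hSpow haf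
    have hsb : (cyc N n) ^ b = (cyc N n) ^ (f:ℤ) := zpow_congr hSpow hbf
    have htb : (cyc N p) ^ b = (cyc N p) ^ (e:ℤ) := zpow_congr hTpow hbe
    rw [hta, hsa, hsb] at hE
    have hc0 : Commute ((cyc N p) ^ (-b)) ((cyc N n) ^ (f:ℤ)) := hE
    have hc1 := hc0.symm.inv_right
    rw [← zpow_neg, neg_neg, htb] at hc1
    have hef : e = 0 ∨ f = 0 := by
      by_contra hcon
      push_neg at hcon
      refine commute_contra hn3 hnp hpN (by omega) hep (by omega) hfn ?_
      rw [← zpow_natCast (cyc N n) f, ← zpow_natCast (cyc N p) e]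
      exact hc1
    rcases hef with he0 | hf0
    · right
      have hpa : (p:ℤ) ∣ a := by rw [he0] at hae; simpa using hae
      refine ⟨hpa, ?_⟩
      have hpb : (p:ℤ) ∣ b := by
        have := dvd_shift (show (p:ℤ) ∣ a - 0 by simpa using hpa) hab rfl
        simpa using this
      have hpc : (p:ℤ) ∣ c := by
        have := dvd_shift (show (p:ℤ) ∣ a - 0 by simpa using hpa) hac rfl
        simpa using this
      have hAc : (cyc N n * cyc N p) ^ c = 1 := zpow_eq_one_of hApow hpc
      have hTb : (cyc N p) ^ (-b) = 1 := zpow_eq_one_of hTpow hpb.neg_right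
      rw [hAc, hTb, one_mul, one_mul, hsa] at h1
      have hone : (cyc N n) ^ ((f:ℤ) - 1) = 1 := by
        rw [zpow_sub, ← h1, zpow_one, mul_inv_cancel]
      have hnf1 : (n:ℤ) ∣ (f:ℤ) - 1 := (cyc_zpow_eq_one_iff hn hnN _).mp hone
      have := Int.dvd_add haf hnf1
      rw [show a - f + ((f:ℤ) - 1) = a - 1 from by ring] at this
      exact this
    · left
      have hna : (n:ℤ) ∣ a := by rw [hf0] at haf; simpa using haf
      have hsa1 : (cyc N n) ^ a = 1 := zpow_eq_one_of hSpow hna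
      have hAc : (cyc N n * cyc N p) ^ c = (cyc N n * cyc N p) ^ (e:ℤ) :=
        zpow_congr hApow hce
      have hTbE : (cyc N p) ^ (-b) = ((cyc N p) ^ (e:ℤ))⁻¹ := by
        rw [← zpow_neg]
        exact zpow_congr hTpow
          (by rw [show -b - -(e:ℤ) = -(b - e) from by ring]; exact hbe.neg_right)
      rw [hsa1, mul_one, hAc, hTbE] at h1
      have hkey : (cyc N n * cyc N p) ^ (e:ℤ) = cyc N n * (cyc N p) ^ (e:ℤ) := by
        have h3 := congrArg (fun z => z * (cyc N p) ^ (e:ℤ)) h1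
        simp only [mul_assoc] at h3
        rw [inv_mul_cancel, mul_one] at h3
        exact h3.symm
      rw [zpow_natCast, zpow_natCast] at hkey
      have h0N : 0 < N := by omega
      have hτ0 : (((cyc N p) ^ (e:ℕ)) ⟨0, h0N⟩ : ℕ) = e := by
        rw [cyc_pow_val hp1 hpN, if_pos (by show (0:ℕ) < p; omega)]
        show (0 + e) % p = e
        rw [Nat.zero_add, Nat.mod_eq_of_lt hep]
      have hrhs : ((cyc N n * (cyc N p) ^ (e:ℕ)) ⟨0, h0N⟩ : ℕ) = cycF n e := by
        rw [Equiv.Perm.mul_apply, cyc_val_s10 hn1 hnN, hτ0]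
      have hlhs : (((cyc N n * cyc N p) ^ (e:ℕ)) ⟨0, h0N⟩ : ℕ) = orbA n p e := by
        rw [AA_pow_zero_val hn3 hodd hnp hpN, Nat.mod_eq_of_lt hep]
      have horb : orbA n p e = cycF n e := by
        rw [← hlhs, ← hrhs, hkey]
      have he1 : e = 1 := orbA_eq_cycF hn3 hodd hnp hep horb
      have : (p:ℤ) ∣ a - 1 := by rw [he1] at hae; exact_mod_cast hae
      exact ⟨this, hna⟩
  · rintro (⟨hpa1, hna⟩ | ⟨hpa, hna1⟩)
    · have hpb1 : (p:ℤ) ∣ b - 1 := dvd_shift hpa1 hab rfl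
      have hpc1 : (p:ℤ) ∣ c - 1 := dvd_shift hpa1 hac rfl
      have hnb : (n:ℤ) ∣ b := by
        have := dvd_shift (show (n:ℤ) ∣ a - 0 by simpa using hna) hab' rfl
        simpa using this
      have hAc : (cyc N n * cyc N p) ^ c = cyc N n * cyc N p := by
        have := zpow_congr hApow (y := 1) (by simpa using hpc1)
        simpa using this
      have hTb : ((cyc N p)⁻¹) ^ b = (cyc N p)⁻¹ := by
        rw [inv_zpow, ← zpow_neg]
        have := zpow_congr hTpow (x := -b) (y := -1)
          (by rw [show -b - -1 = -(b-1) from by ring]; exact hpb1.neg_right)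
        rw [this]
        simp
      have hTa : ((cyc N p)⁻¹) ^ a = (cyc N p)⁻¹ := by
        rw [inv_zpow, ← zpow_neg]
        have := zpow_congr hTpow (x := -a) (y := -1)
          (by rw [show -a - -1 = -(a-1) from by ring]; exact hpa1.neg_right)
        rw [this]
        simp
      have hSa : (cyc N n) ^ a = 1 := zpow_eq_one_of hSpow hna
      have hSb : (cyc N n) ^ b = 1 := zpow_eq_one_of hSpow hnb
      constructor
      · rw [hAc, hTb, hSa, mul_one, mul_assoc, mul_inv_cancel, mul_one]
      · rw [hAc, hTa, hSb, mul_one, mul_assoc, mul_inv_cancel, mul_one]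
    · have hpb : (p:ℤ) ∣ b := by
        have := dvd_shift (show (p:ℤ) ∣ a - 0 by simpa using hpa) hab rfl
        simpa using this
      have hpc : (p:ℤ) ∣ c := by
        have := dvd_shift (show (p:ℤ) ∣ a - 0 by simpa using hpa) hac rfl
        simpa using this
      have hnb1 : (n:ℤ) ∣ b - 1 := dvd_shift hna1 hab' rfl
      have hAc : (cyc N n * cyc N p) ^ c = 1 := zpow_eq_one_of hApow hpc
      have hTb : ((cyc N p)⁻¹) ^ b = 1 := by
        rw [inv_zpow, zpow_eq_one_of hTpow hpb, inv_one]
      have hTa : ((cyc N p)⁻¹) ^ a = 1 := by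
        rw [inv_zpow, zpow_eq_one_of hTpow hpa, inv_one]
      have hSa : (cyc N n) ^ a = cyc N n := by
        have := zpow_congr hSpow (y := 1) (by simpa using hna1)
        simpa using this
      have hSb : (cyc N n) ^ b = cyc N n := by
        have := zpow_congr hSpow (y := 1) (by simpa using hnb1)
        simpa using this
      constructor
      · rw [hAc, hTb, hSa, one_mul, one_mul]
      · rw [hAc, hTa, hSb, one_mul, mul_one]

lemma BB_pow_p {N q p : ℕ} (hq3 : 3 ≤ q) (hqodd : q % 2 = 1) (hqp : q < p) (hpN : p ≤ N) :
    (cyc N p * cyc N q) ^ p = 1 := by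
  have hA := AA_pow_p hq3 hqodd hqp hpN
  have hconj : cyc N p * cyc N q = cyc N p * (cyc N q * cyc N p) * (cyc N p)⁻¹ := by group
  rw [hconj, conj_pow, hA, mul_one, mul_inv_cancel]

lemma conj_one_iff {G : Type*} [Group G] (t x : G) : (1 = t * x * t⁻¹) ↔ x = 1 := by
  rw [eq_comm, mul_inv_eq_one, mul_eq_left]

section Xlemmas
variable {N q p : ℕ} (hq3 : 3 ≤ q) (hqodd : q % 2 = 1) (hqp : q < p) (hpN : p ≤ N)
  (hpprime : p.Prime) (hqprime : q.Prime)

include hq3 hqodd hqp hpN hpprime hqprime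

lemma X2_iff {a b c ε : ℤ} (hε : ε = 0 ∨ ε = 1)
    (hb : (p:ℤ) ∣ b - ε) (hc : (p:ℤ) ∣ c - ε) :
    ((1 : Equiv.Perm (Fin N)) =
      ((cyc N p)⁻¹) ^ c * (cyc N p * cyc N q) ^ b * ((cyc N q)⁻¹) ^ a) ↔
      (q:ℤ) ∣ a - ε := by
  have hqN : q ≤ N := by omega
  have hp1 : 1 ≤ p := by omega
  have hB : (cyc N p * cyc N q) ^ p = 1 := BB_pow_p hq3 hqodd hqp hpN
  have hT : (cyc N p) ^ p = 1 := cyc_pow_n hp1 hpN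
  rcases hε with rfl | rfl
  · rw [sub_zero] at hb hc
    have hTc : ((cyc N p)⁻¹) ^ c = 1 := by
      rw [inv_zpow, zpow_eq_one_of hT hc, inv_one]
    have hBb : (cyc N p * cyc N q) ^ b = 1 := zpow_eq_one_of hB hb
    rw [hTc, hBb, one_mul, one_mul, inv_zpow, ← zpow_neg, eq_comm,
      cyc_zpow_eq_one_iff hqprime hqN, sub_zero, Int.dvd_neg]
  · have hTc : ((cyc N p)⁻¹) ^ c = (cyc N p)⁻¹ := by
      rw [inv_zpow, zpow_congr hT hc, zpow_one]
    have hBb : (cyc N p * cyc N q) ^ b = cyc N p * cyc N q := by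
      rw [zpow_congr hB hb, zpow_one]
    rw [hTc, hBb, inv_mul_cancel_left, inv_zpow, ← zpow_neg]
    nth_rewrite 1 [show cyc N q = (cyc N q) ^ (1:ℤ) from (zpow_one _).symm]
    rw [← zpow_add, eq_comm, cyc_zpow_eq_one_iff hqprime hqN,
      show 1 + -a = -(a - 1) from by ring, Int.dvd_neg]

lemma X3_iff {a b c ε : ℤ} (hε : ε = 0 ∨ ε = 1)
    (ha : (p:ℤ) ∣ a - ε) (hc : (p:ℤ) ∣ c - ε) :
    ((1 : Equiv.Perm (Fin N)) =
      (cyc N p * cyc N q) ^ c * ((cyc N q)⁻¹) ^ b * ((cyc N p)⁻¹) ^ a) ↔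
      (q:ℤ) ∣ b - ε := by
  have hqN : q ≤ N := by omega
  have hp1 : 1 ≤ p := by omega
  have hB : (cyc N p * cyc N q) ^ p = 1 := BB_pow_p hq3 hqodd hqp hpN
  have hT : (cyc N p) ^ p = 1 := cyc_pow_n hp1 hpN
  rcases hε with rfl | rfl
  · rw [sub_zero] at ha hc
    have hTa : ((cyc N p)⁻¹) ^ a = 1 := by
      rw [inv_zpow, zpow_eq_one_of hT ha, inv_one]
    have hBc : (cyc N p * cyc N q) ^ c = 1 := zpow_eq_one_of hB hc
    rw [hTa, hBc, one_mul, mul_one, inv_zpow, ← zpow_neg, eq_comm,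
      cyc_zpow_eq_one_iff hqprime hqN, sub_zero, Int.dvd_neg]
  · have hTa : ((cyc N p)⁻¹) ^ a = (cyc N p)⁻¹ := by
      rw [inv_zpow, zpow_congr hT ha, zpow_one]
    have hBc : (cyc N p * cyc N q) ^ c = cyc N p * cyc N q := by
      rw [zpow_congr hB hc, zpow_one]
    rw [hTa, hBc, inv_zpow, ← zpow_neg]
    have hshape : (cyc N p * cyc N q) * (cyc N q) ^ (-b) * (cyc N p)⁻¹ =
        cyc N p * ((cyc N q) ^ (1 + -b)) * (cyc N p)⁻¹ := by
      rw [zpow_add, zpow_one]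
      group
    rw [hshape, conj_one_iff, cyc_zpow_eq_one_iff hqprime hqN,
      show 1 + -b = -(b - 1) from by ring, Int.dvd_neg]

lemma X4_iff {a b c ε : ℤ} (hε : ε = 0 ∨ ε = 1)
    (ha : (p:ℤ) ∣ a - ε) (hb : (p:ℤ) ∣ b - ε) :
    ((1 : Equiv.Perm (Fin N)) =
      ((cyc N q)⁻¹) ^ c * ((cyc N p)⁻¹) ^ b * (cyc N p * cyc N q) ^ a) ↔
      (q:ℤ) ∣ c - ε := by
  have hqN : q ≤ N := by omega
  have hp1 : 1 ≤ p := by omega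
  have hB : (cyc N p * cyc N q) ^ p = 1 := BB_pow_p hq3 hqodd hqp hpN
  have hT : (cyc N p) ^ p = 1 := cyc_pow_n hp1 hpN
  rcases hε with rfl | rfl
  · rw [sub_zero] at ha hb
    have hTb : ((cyc N p)⁻¹) ^ b = 1 := by
      rw [inv_zpow, zpow_eq_one_of hT hb, inv_one]
    have hBa : (cyc N p * cyc N q) ^ a = 1 := zpow_eq_one_of hB ha
    rw [hTb, hBa, mul_one, mul_one, inv_zpow, ← zpow_neg, eq_comm,
      cyc_zpow_eq_one_iff hqprime hqN, sub_zero, Int.dvd_neg]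
  · have hTb : ((cyc N p)⁻¹) ^ b = (cyc N p)⁻¹ := by
      rw [inv_zpow, zpow_congr hT hb, zpow_one]
    have hBa : (cyc N p * cyc N q) ^ a = cyc N p * cyc N q := by
      rw [zpow_congr hB ha, zpow_one]
    rw [hTb, hBa, inv_zpow, ← zpow_neg]
    have hshape : (cyc N q) ^ (-c) * (cyc N p)⁻¹ * (cyc N p * cyc N q) =
        (cyc N q) ^ (-c + 1) := by
      rw [zpow_add, zpow_one]
      group
    rw [hshape, eq_comm, cyc_zpow_eq_one_iff hqprime hqN,
      show -c + 1 = -(c - 1) from by ring, Int.dvd_neg]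

end Xlemmas

lemma multZ_iff {M : ℕ} (t u v w a b c : ℤ) :
    (Multiplicative.ofAdd ((t : ZMod M)) =
      Multiplicative.ofAdd ((u : ZMod M)) ^ c * Multiplicative.ofAdd ((v : ZMod M)) ^ b *
        Multiplicative.ofAdd ((w : ZMod M)) ^ a) ↔
    (M:ℤ) ∣ (c * u + b * v + a * w) - t := by
  rw [← ofAdd_zsmul, ← ofAdd_zsmul, ← ofAdd_zsmul, ← ofAdd_add, ← ofAdd_add,
    Equiv.apply_eq_iff_eq]
  rw [show (c • ((u:ZMod M)) + b • ((v:ZMod M)) + a • ((w:ZMod M)))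
      = (((c * u + b * v + a * w : ℤ) : ZMod M)) from by push_cast [zsmul_eq_mul]; ring]
  rw [ZMod.intCast_eq_intCast_iff, Int.modEq_iff_dvd]

lemma coordA_iff {M : ℕ} (a b c : ℤ) :
    (Multiplicative.ofAdd ((0 : ZMod M)) =
      Multiplicative.ofAdd ((0 : ZMod M)) ^ c * Multiplicative.ofAdd ((-1 : ZMod M)) ^ b *
        Multiplicative.ofAdd ((1 : ZMod M)) ^ a) ↔ (M:ℤ) ∣ a - b := by
  have := multZ_iff (M := M) 0 0 (-1) 1 a b c
  push_cast at this
  rw [this, show c * 0 + b * -1 + a * 1 - 0 = a - b from by ring]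

lemma coordB_iff {M : ℕ} (a b c : ℤ) :
    (Multiplicative.ofAdd ((0 : ZMod M)) =
      Multiplicative.ofAdd ((-1 : ZMod M)) ^ c * Multiplicative.ofAdd ((0 : ZMod M)) ^ b *
        Multiplicative.ofAdd ((1 : ZMod M)) ^ a) ↔ (M:ℤ) ∣ a - c := by
  have := multZ_iff (M := M) 0 (-1) 0 1 a b c
  push_cast at this
  rw [this, show c * -1 + b * 0 + a * 1 - 0 = a - c from by ring]

lemma coordC_iff {M : ℕ} (a b c : ℤ) :
    (Multiplicative.ofAdd ((1 : ZMod M)) =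
      Multiplicative.ofAdd ((1 : ZMod M)) ^ c * Multiplicative.ofAdd ((1 : ZMod M)) ^ b *
        Multiplicative.ofAdd ((1 : ZMod M)) ^ a) ↔ (M:ℤ) ∣ (c + b + a) - 1 := by
  have := multZ_iff (M := M) 1 1 1 1 a b c
  push_cast at this
  rw [this, show c * 1 + b * 1 + a * 1 - 1 = (c + b + a) - 1 from by ring]

lemma crt_exists {ι : Type*} [DecidableEq ι] (M : ι → ℕ) (t : ι → ℤ) (s : Finset ι) :
    (∀ k ∈ s, ∀ l ∈ s, k ≠ l → Nat.Coprime (M k) (M l)) →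
    ∃ a : ℤ, ∀ k ∈ s, (M k : ℤ) ∣ a - t k := by
  induction s using Finset.induction_on with
  | empty => exact fun _ => ⟨0, by simp⟩
  | @insert k s hks ih =>
    intro hco
    obtain ⟨a, ha⟩ := ih (fun x hx y hy hxy =>
      hco x (Finset.mem_insert_of_mem hx) y (Finset.mem_insert_of_mem hy) hxy)
    have hncop : Nat.Coprime (M k) (∏ l ∈ s, M l) :=
      Nat.Coprime.prod_right (fun l hl =>
        hco k (Finset.mem_insert_self k s) l (Finset.mem_insert_of_mem hl)
          (by rintro rfl; exact hks hl))
    have hcop : IsCoprime ((M k : ℤ)) (((∏ l ∈ s, M l : ℕ)) : ℤ) := by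
      rw [Int.isCoprime_iff_gcd_eq_one, Int.gcd_natCast_natCast]
      exact hncop
    obtain ⟨u, v, huv⟩ := hcop
    set Q : ℤ := ((∏ l ∈ s, M l : ℕ) : ℤ) with hQ
    refine ⟨t k * (v * Q) + a * (u * M k), fun x hx => ?_⟩
    rcases Finset.mem_insert.mp hx with rfl | hxs
    · exact ⟨u * (a - t x), by linear_combination (t x) * huv⟩
    · have h1 : (M x : ℤ) ∣ Q := by
        rw [hQ]
        exact_mod_cast Int.natCast_dvd_natCast.mpr (Finset.dvd_prod_of_mem M hxs)
      have hsplit : t k * (v * Q) + a * (u * M k) - t x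
          = Q * (v * (t k - a)) + (a - t x) := by linear_combination a * huv
      rw [hsplit]
      exact dvd_add (h1.mul_right _) (ha x hxs)


lemma card_inter_triple {m : ℕ} (A' : Finset (Fin m)) (x y z : Fin m)
    (hxy : x ≠ y) (hxz : x ≠ z) (hyz : y ≠ z) :
    ((A' ∩ ({x, y, z} : Finset (Fin m))).card : ℤ)
      = (if x ∈ A' then (1:ℤ) else 0) + (if y ∈ A' then 1 else 0)
        + (if z ∈ A' then 1 else 0) := by
  classical
  rw [Finset.inter_comm, ← Finset.filter_mem_eq_inter, Finset.card_filter]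
  rw [show ({x, y, z} : Finset (Fin m)) = insert x (insert y {z}) from rfl]
  rw [Finset.sum_insert (by simp [hxy, hxz]), Finset.sum_insert (by simp [hyz]),
    Finset.sum_singleton]
  push_cast
  split_ifs <;> ring

lemma eps_sum {q : ℕ} (hq : 3 ≤ q) {e0 e1 e2 : ℤ}
    (h0 : e0 = 0 ∨ e0 = 1) (h1 : e1 = 0 ∨ e1 = 1) (h2 : e2 = 0 ∨ e2 = 1)
    (hdvd : (q:ℤ) ∣ (e2 + e1 + e0) - 1) : e0 + e1 + e2 = 1 := by
  have hq' : (3:ℤ) ≤ (q:ℤ) := by exact_mod_cast hq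
  have key : ∀ x : ℤ, (q:ℤ) ∣ x → -1 ≤ x → x ≤ 2 → x = 0 := by
    intro x hx hx1 hx2
    by_contra hne
    have habs : (q:ℤ) ∣ |x| := (dvd_abs _ _).mpr hx
    have hpos : 0 < |x| := abs_pos.mpr hne
    have := Int.le_of_dvd hpos habs
    rcases abs_cases x with ⟨h, _⟩ | ⟨h, _⟩ <;> omega
  have := key _ hdvd (by omega) (by omega)
  omega

end KnapsackAux

/-- With pairwise distinct odd primes `p_j, r_j, q_i` satisfying
`p_j > r_j > 2` and `p_j > q_i > 2`, `P = max_j p_j`, the group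
`G = ∏_j V_j × ∏_i C_i` and the elements `g, g₁, g₂, g₃` defined above, there exists
`A' ⊆ {1,…,m}` with `|A' ∩ {α(i,1),α(i,2),α(i,3)}| = 1` for every `i` if and only if
there are `z₁, z₂, z₃ ∈ ℤ` with `g = g₁^{z₁} g₂^{z₂} g₃^{z₃}` in `G` (the paper's
left-to-right product `g₁^{z₁} g₂^{z₂} g₃^{z₃}` is `g₃^{z₃} * g₂^{z₂} * g₁^{z₁}` in
Mathlib's convention). -/
theorem x3hs_iff_three_knapsack
    (m d : ℕ) (hm : 1 ≤ m) (hd : 1 ≤ d)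
    (α : Fin d → Fin 3 → Fin m) (hα : ∀ i, Function.Injective (α i))
    (p r : Fin m → ℕ) (q : Fin d → ℕ)
    (hp : ∀ j, (p j).Prime) (hr : ∀ j, (r j).Prime) (hq : ∀ i, (q i).Prime)
    (hp_odd : ∀ j, Odd (p j)) (hr_odd : ∀ j, Odd (r j)) (hq_odd : ∀ i, Odd (q i))
    (hrp : ∀ j, r j < p j) (h2r : ∀ j, 2 < r j)
    (hqp : ∀ i j, q i < p j) (h2q : ∀ i, 2 < q i)
    (hp_inj : Function.Injective p) (hr_inj : Function.Injective r)
    (hq_inj : Function.Injective q)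
    (hpr : ∀ j j', p j ≠ r j') (hpq : ∀ j i, p j ≠ q i) (hrq : ∀ j i, r j ≠ q i)
    (P : ℕ) (hP : IsGreatest (Set.range p) P) :
    (∃ A' : Finset (Fin m), ∀ i : Fin d,
        (A' ∩ ({α i 0, α i 1, α i 2} : Finset (Fin m))).card = 1) ↔
    (∃ z₁ z₂ z₃ : ℤ,
        gTarget m d p r q P =
          gThree m d p r q α P ^ z₃ * gTwo m d p r q α P ^ z₂ *
            gOne m d p r q α P ^ z₁) := by
  classical
  have hPub : ∀ j, p j ≤ P := fun j => hP.2 ⟨j, rfl⟩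
  have hrodd : ∀ j, r j % 2 = 1 := fun j => Nat.odd_iff.mp (hr_odd j)
  have hqodd : ∀ i, q i % 2 = 1 := fun i => Nat.odd_iff.mp (hq_odd i)
  have hα01 : ∀ i, α i 0 ≠ α i 1 := fun i => (hα i).ne (by decide)
  have hα02 : ∀ i, α i 0 ≠ α i 2 := fun i => (hα i).ne (by decide)
  have hα12 : ∀ i, α i 1 ≠ α i 2 := fun i => (hα i).ne (by decide)
  constructor
  · rintro ⟨A', hA'⟩
    set χ : Fin m → ℤ := fun j => if j ∈ A' then 1 else 0 with hχ
    have hχ01 : ∀ j, χ j = 0 ∨ χ j = 1 := by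
      intro j; by_cases h : j ∈ A' <;> simp [hχ, h]
    have hsum : ∀ i, χ (α i 0) + χ (α i 1) + χ (α i 2) = 1 := by
      intro i
      have h := card_inter_triple A' (α i 0) (α i 1) (α i 2) (hα01 i) (hα02 i) (hα12 i)
      rw [hA' i] at h
      simpa [hχ] using h.symm
    -- CRT moduli
    set ι := (Fin m ⊕ Fin m ⊕ Fin d)
    set M : ι → ℕ := Sum.elim p (Sum.elim r q) with hM
    have hco : ∀ k ∈ (Finset.univ : Finset ι), ∀ l ∈ (Finset.univ : Finset ι),
        k ≠ l → Nat.Coprime (M k) (M l) := by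
      rintro (j | j | i) - (j' | j' | i') - hne <;>
        simp only [hM, Sum.elim_inl, Sum.elim_inr]
      · exact (Nat.coprime_primes (hp j) (hp j')).mpr
          (fun h => hne (by rw [hp_inj h]))
      · exact (Nat.coprime_primes (hp j) (hr j')).mpr (hpr j j')
      · exact (Nat.coprime_primes (hp j) (hq i')).mpr (hpq j i')
      · exact (Nat.coprime_primes (hr j) (hp j')).mpr (Ne.symm (hpr j' j))
      · exact (Nat.coprime_primes (hr j) (hr j')).mpr
          (fun h => hne (by rw [hr_inj h]))
      · exact (Nat.coprime_primes (hr j) (hq i')).mpr (hrq j i')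
      · exact (Nat.coprime_primes (hq i) (hp j')).mpr (Ne.symm (hpq j' i))
      · exact (Nat.coprime_primes (hq i) (hr j')).mpr (Ne.symm (hrq j' i))
      · exact (Nat.coprime_primes (hq i) (hq i')).mpr
          (fun h => hne (by rw [hq_inj h]))
    obtain ⟨a, ha⟩ := crt_exists M
      (Sum.elim (fun j => χ j) (Sum.elim (fun j => 1 - χ j) (fun i => χ (α i 0))))
      Finset.univ hco
    obtain ⟨b, hb⟩ := crt_exists M
      (Sum.elim (fun j => χ j) (Sum.elim (fun j => 1 - χ j) (fun i => χ (α i 1))))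
      Finset.univ hco
    obtain ⟨c, hc⟩ := crt_exists M
      (Sum.elim (fun j => χ j) (Sum.elim (fun j => (0:ℤ)) (fun i => χ (α i 2))))
      Finset.univ hco
    have hap : ∀ j, (p j : ℤ) ∣ a - χ j := fun j => ha (.inl j) (Finset.mem_univ _)
    have hbp : ∀ j, (p j : ℤ) ∣ b - χ j := fun j => hb (.inl j) (Finset.mem_univ _)
    have hcp : ∀ j, (p j : ℤ) ∣ c - χ j := fun j => hc (.inl j) (Finset.mem_univ _)
    have har : ∀ j, (r j : ℤ) ∣ a - (1 - χ j) := fun j => ha (.inr (.inl j)) (Finset.mem_univ _)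
    have hbr : ∀ j, (r j : ℤ) ∣ b - (1 - χ j) := fun j => hb (.inr (.inl j)) (Finset.mem_univ _)
    have haq : ∀ i, (q i : ℤ) ∣ a - χ (α i 0) := fun i => ha (.inr (.inr i)) (Finset.mem_univ _)
    have hbq : ∀ i, (q i : ℤ) ∣ b - χ (α i 1) := fun i => hb (.inr (.inr i)) (Finset.mem_univ _)
    have hcq : ∀ i, (q i : ℤ) ∣ c - χ (α i 2) := fun i => hc (.inr (.inr i)) (Finset.mem_univ _)
    have hab : ∀ j, (p j : ℤ) ∣ a - b := fun j => by
      have := Int.dvd_sub (hap j) (hbp j)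
      rw [show a - χ j - (b - χ j) = a - b from by ring] at this; exact this
    have hac : ∀ j, (p j : ℤ) ∣ a - c := fun j => by
      have := Int.dvd_sub (hap j) (hcp j)
      rw [show a - χ j - (c - χ j) = a - c from by ring] at this; exact this
    have hab' : ∀ j, (r j : ℤ) ∣ a - b := fun j => by
      have := Int.dvd_sub (har j) (hbr j)
      rw [show a - (1 - χ j) - (b - (1 - χ j)) = a - b from by ring] at this; exact this
    refine ⟨a, b, c, ?_⟩
    refine Prod.ext (funext fun j => ?_) (funext fun i => ?_)
    · have hdisj : ((p j:ℤ) ∣ a - 1 ∧ (r j:ℤ) ∣ a) ∨ ((p j:ℤ) ∣ a ∧ (r j:ℤ) ∣ a - 1) := by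
        rcases hχ01 j with h0 | h1
        · right
          constructor
          · have := hap j; rw [h0, sub_zero] at this; exact this
          · have := har j; rw [h0, sub_zero] at this; exact this
        · left
          constructor
          · have := hap j; rw [h1] at this; exact this
          · have := har j; rw [h1] at this; simpa using this
      have h12 := (V_iff (h2r j) (hrodd j) (hrp j) (le_refl (p j)) (hp j) (hr j)
        (hab j) (hac j) (hab' j)).mpr hdisj
      have h3 := (coordA_iff (M := p j) a b c).mpr (hab j)
      have h4 := (coordB_iff (M := p j) a b c).mpr (hac j)
      have h5 := (coordA_iff (M := r j) a b c).mpr (hab' j)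
      exact Prod.ext h12.1 (Prod.ext h12.2 (Prod.ext h3 (Prod.ext h4 h5)))
    · have hsum1 : (q i : ℤ) ∣ (c + b + a) - 1 := by
        have h := Int.dvd_add (Int.dvd_add (hcq i) (hbq i)) (haq i)
        rw [show c - χ (α i 2) + (b - χ (α i 1)) + (a - χ (α i 0))
            = (c + b + a) - (χ (α i 0) + χ (α i 1) + χ (α i 2)) from by ring,
          hsum i] at h
        exact h
      have h1 := (coordC_iff (M := q i) a b c).mpr hsum1
      have h2 := (X2_iff (N := P) (h2q i) (hqodd i) (hqp i (α i 0)) (hPub (α i 0))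
        (hp (α i 0)) (hq i) (hχ01 (α i 0)) (hbp (α i 0)) (hcp (α i 0))).mpr (haq i)
      have h3 := (X3_iff (N := P) (h2q i) (hqodd i) (hqp i (α i 1)) (hPub (α i 1))
        (hp (α i 1)) (hq i) (hχ01 (α i 1)) (hap (α i 1)) (hcp (α i 1))).mpr (hbq i)
      have h4 := (X4_iff (N := P) (h2q i) (hqodd i) (hqp i (α i 2)) (hPub (α i 2))
        (hp (α i 2)) (hq i) (hχ01 (α i 2)) (hap (α i 2)) (hbp (α i 2))).mpr (hcq i)
      exact Prod.ext h1 (Prod.ext h2 (Prod.ext h3 h4))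
  · rintro ⟨a, b, c, hz⟩
    -- extract components
    have hVj := fun j => congrFun (congrArg Prod.fst hz) j
    have hCi := fun i => congrFun (congrArg Prod.snd hz) i
    have e1 : ∀ j, cyc (p j) (r j) =
        (cyc (p j) (r j) * cyc (p j) (p j)) ^ c * ((cyc (p j) (p j))⁻¹) ^ b *
          (cyc (p j) (r j)) ^ a :=
      fun j => congrArg (fun v => v.1) (hVj j)
    have e2 : ∀ j, cyc (p j) (r j) =
        (cyc (p j) (r j) * cyc (p j) (p j)) ^ c * (cyc (p j) (r j)) ^ b *
          ((cyc (p j) (p j))⁻¹) ^ a :=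
      fun j => congrArg (fun v => v.2.1) (hVj j)
    have e3 : ∀ j, Multiplicative.ofAdd ((0 : ZMod (p j))) =
        Multiplicative.ofAdd ((0 : ZMod (p j))) ^ c *
          Multiplicative.ofAdd ((-1 : ZMod (p j))) ^ b *
          Multiplicative.ofAdd ((1 : ZMod (p j))) ^ a :=
      fun j => congrArg (fun v => v.2.2.1) (hVj j)
    have e4 : ∀ j, Multiplicative.ofAdd ((0 : ZMod (p j))) =
        Multiplicative.ofAdd ((-1 : ZMod (p j))) ^ c *
          Multiplicative.ofAdd ((0 : ZMod (p j))) ^ b *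
          Multiplicative.ofAdd ((1 : ZMod (p j))) ^ a :=
      fun j => congrArg (fun v => v.2.2.2.1) (hVj j)
    have e5 : ∀ j, Multiplicative.ofAdd ((0 : ZMod (r j))) =
        Multiplicative.ofAdd ((0 : ZMod (r j))) ^ c *
          Multiplicative.ofAdd ((-1 : ZMod (r j))) ^ b *
          Multiplicative.ofAdd ((1 : ZMod (r j))) ^ a :=
      fun j => congrArg (fun v => v.2.2.2.2) (hVj j)
    have f1 : ∀ i, Multiplicative.ofAdd ((1 : ZMod (q i))) =
        Multiplicative.ofAdd ((1 : ZMod (q i))) ^ c *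
          Multiplicative.ofAdd ((1 : ZMod (q i))) ^ b *
          Multiplicative.ofAdd ((1 : ZMod (q i))) ^ a :=
      fun i => congrArg (fun v => v.1) (hCi i)
    have f2 : ∀ i, (1 : Equiv.Perm (Fin P)) =
        ((cyc P (p (α i 0)))⁻¹) ^ c * (cyc P (p (α i 0)) * cyc P (q i)) ^ b *
          ((cyc P (q i))⁻¹) ^ a :=
      fun i => congrArg (fun v => v.2.1) (hCi i)
    have f3 : ∀ i, (1 : Equiv.Perm (Fin P)) =
        (cyc P (p (α i 1)) * cyc P (q i)) ^ c * ((cyc P (q i))⁻¹) ^ b *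
          ((cyc P (p (α i 1)))⁻¹) ^ a :=
      fun i => congrArg (fun v => v.2.2.1) (hCi i)
    have f4 : ∀ i, (1 : Equiv.Perm (Fin P)) =
        ((cyc P (q i))⁻¹) ^ c * ((cyc P (p (α i 2)))⁻¹) ^ b *
          (cyc P (p (α i 2)) * cyc P (q i)) ^ a :=
      fun i => congrArg (fun v => v.2.2.2) (hCi i)
    -- congruences from abelian coordinates
    have hab : ∀ j, (p j : ℤ) ∣ a - b := fun j => (coordA_iff a b c).mp (e3 j)
    have hac : ∀ j, (p j : ℤ) ∣ a - c := fun j => (coordB_iff a b c).mp (e4 j)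
    have hab' : ∀ j, (r j : ℤ) ∣ a - b := fun j => (coordA_iff a b c).mp (e5 j)
    have hdisj : ∀ j, ((p j:ℤ) ∣ a - 1 ∧ (r j:ℤ) ∣ a) ∨ ((p j:ℤ) ∣ a ∧ (r j:ℤ) ∣ a - 1) :=
      fun j => (V_iff (h2r j) (hrodd j) (hrp j) (le_refl (p j)) (hp j) (hr j)
        (hab j) (hac j) (hab' j)).mp ⟨e1 j, e2 j⟩
    refine ⟨Finset.univ.filter (fun j => (p j : ℤ) ∣ a - 1), fun i => ?_⟩
    set A' := Finset.univ.filter (fun j => (p j : ℤ) ∣ a - 1) with hA'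
    set χ : Fin m → ℤ := fun j => if j ∈ A' then 1 else 0 with hχ
    have hχ01 : ∀ j, χ j = 0 ∨ χ j = 1 := by
      intro j; by_cases h : j ∈ A' <;> simp [hχ, h]
    have hjfacts : ∀ j, (p j : ℤ) ∣ a - χ j ∧ (p j : ℤ) ∣ b - χ j ∧ (p j : ℤ) ∣ c - χ j := by
      intro j
      have hmem : j ∈ A' ↔ (p j : ℤ) ∣ a - 1 := by simp [hA']
      have haχ : (p j : ℤ) ∣ a - χ j := by
        rcases hdisj j with ⟨h1, -⟩ | ⟨h1, -⟩
        · rw [hχ]; simp only [hmem.mpr h1, if_pos]; exact h1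
        · have hnot : ¬ (p j : ℤ) ∣ a - 1 := by
            intro hcon
            have := Int.dvd_sub h1 hcon
            rw [show a - (a - 1) = 1 from by ring] at this
            have h2 := Int.le_of_dvd one_pos this
            have := (hp j).two_le
            omega
          rw [hχ]
          simp only [hmem, hnot, if_neg, not_false_iff]
          simpa using h1
      refine ⟨haχ, dvd_shift haχ (hab j) rfl, dvd_shift haχ (hac j) rfl⟩
    have h2 := (X2_iff (N := P) (h2q i) (hqodd i) (hqp i (α i 0)) (hPub (α i 0))
      (hp (α i 0)) (hq i) (hχ01 (α i 0)) (hjfacts (α i 0)).2.1 (hjfacts (α i 0)).2.2).mp (f2 i)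
    have h3 := (X3_iff (N := P) (h2q i) (hqodd i) (hqp i (α i 1)) (hPub (α i 1))
      (hp (α i 1)) (hq i) (hχ01 (α i 1)) (hjfacts (α i 1)).1 (hjfacts (α i 1)).2.2).mp (f3 i)
    have h4 := (X4_iff (N := P) (h2q i) (hqodd i) (hqp i (α i 2)) (hPub (α i 2))
      (hp (α i 2)) (hq i) (hχ01 (α i 2)) (hjfacts (α i 2)).1 (hjfacts (α i 2)).2.1).mp (f4 i)
    have h1 := (coordC_iff (M := q i) a b c).mp (f1 i)
    -- q i divides (ε0 + ε1 + ε2) - 1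
    have hqsum : (q i : ℤ) ∣ (χ (α i 2) + χ (α i 1) + χ (α i 0)) - 1 := by
      have hd := Int.dvd_sub h1 (Int.dvd_add (Int.dvd_add h4 h3) h2)
      rw [show c + b + a - 1 - (c - χ (α i 2) + (b - χ (α i 1)) + (a - χ (α i 0)))
          = (χ (α i 2) + χ (α i 1) + χ (α i 0)) - 1 from by ring] at hd
      exact hd
    have hsum1 : χ (α i 0) + χ (α i 1) + χ (α i 2) = 1 :=
      eps_sum (h2q i) (hχ01 (α i 0)) (hχ01 (α i 1)) (hχ01 (α i 2)) hqsum
    have hcard := card_inter_triple A' (α i 0) (α i 1) (α i 2) (hα01 i) (hα02 i) (hα12 i)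
    have : ((A' ∩ ({α i 0, α i 1, α i 2} : Finset (Fin m))).card : ℤ) = 1 := by
      rw [hcard]
      simpa [hχ] using hsum1
    exact_mod_cast this
end
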